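/- arXiv:2302.11334 — 10 statements merged into one kernel-verified Lean document; each statement's English description precedes it below -/
import Mathlib

section
/- Let T_p > 0, η > 0 and v₀ ∈ ℝ. Define v : [0, T_p) → ℝ by v(t) = tan( arctan(v₀) · ((T_p − t)/T_p)^η ). Then v(0) = v₀ and for every t ∈ [0, T_p), v is differentiable at t with v'(t) = −η (v(t)² + 1) arctan(v(t)) / (T_p − t). Moreover, if v₀ ≠ 0 then v(t) ≠ 0 for all t ∈ [0, T_p), and v(t) → 0 as t → T_p from the left. -/
open Filter Topology Set Real

/-- The arctangent-type reference convergence differential function (Example 1):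
`v(t) = tan(arctan(v₀) ((T_p − t)/T_p)^η)` satisfies `v(0) = v₀`, solves
`v' = −η (v² + 1) arctan(v)/(T_p − t)` on `[0, T_p)`, never vanishes there
when `v₀ ≠ 0`, and converges to `0` exactly as `t → T_p⁻`. -/
theorem rcdf_arctan
    (Tp η v₀ : ℝ) (hTp : 0 < Tp) (hη : 0 < η)
    (v : ℝ → ℝ)
    (hv : ∀ t, v t = Real.tan (Real.arctan v₀ * ((Tp - t) / Tp) ^ η)) :
    v 0 = v₀ ∧
      (∀ t ∈ Ico (0 : ℝ) Tp,
        HasDerivAt v (-η * ((v t) ^ 2 + 1) * Real.arctan (v t) / (Tp - t)) t) ∧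
      (v₀ ≠ 0 → ∀ t ∈ Ico (0 : ℝ) Tp, v t ≠ 0) ∧
      Tendsto v (𝓝[<] Tp) (𝓝 0) := by
  set c := Real.arctan v₀ with hc
  have hcabs : |c| < π / 2 :=
    abs_lt.2 ⟨Real.neg_pi_div_two_lt_arctan _, Real.arctan_lt_pi_div_two _⟩
  have key : ∀ t ∈ Ico (0:ℝ) Tp, 0 < (Tp - t)/Tp ∧ (Tp - t)/Tp ≤ 1 := by
    intro t ht
    constructor
    · exact div_pos (by linarith [ht.2]) hTp
    · rw [div_le_one hTp]; linarith [ht.1]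
  have hθmem : ∀ t ∈ Ico (0:ℝ) Tp, |c * ((Tp - t)/Tp) ^ η| < π/2 := by
    intro t ht
    obtain ⟨h1, h2⟩ := key t ht
    have h3 : (0:ℝ) ≤ ((Tp - t)/Tp) ^ η := (Real.rpow_pos_of_pos h1 η).le
    have h4 : ((Tp - t)/Tp) ^ η ≤ 1 := Real.rpow_le_one h1.le h2 hη.le
    calc |c * ((Tp - t)/Tp) ^ η| = |c| * |((Tp - t)/Tp) ^ η| := abs_mul _ _
      _ ≤ |c| * 1 := by
          rw [abs_of_nonneg h3]; exact mul_le_mul_of_nonneg_left h4 (abs_nonneg _)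
      _ = |c| := mul_one _
      _ < π/2 := hcabs
  have harctan : ∀ t ∈ Ico (0:ℝ) Tp,
      Real.arctan (v t) = c * ((Tp - t)/Tp) ^ η := by
    intro t ht
    rw [hv t, Real.arctan_tan (abs_lt.1 (hθmem t ht)).1 (abs_lt.1 (hθmem t ht)).2]
  have hcos : ∀ t ∈ Ico (0:ℝ) Tp, Real.cos (c * ((Tp - t)/Tp) ^ η) ≠ 0 := by
    intro t ht
    have h := abs_lt.1 (hθmem t ht)
    exact (Real.cos_pos_of_mem_Ioo ⟨by linarith [h.1], h.2⟩).ne'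
  refine ⟨?_, ?_, ?_, ?_⟩
  · rw [hv 0, sub_zero, div_self hTp.ne', Real.one_rpow, mul_one, Real.tan_arctan]
  · intro t ht
    obtain ⟨h1, h2⟩ := key t ht
    have hrne : (Tp - t)/Tp ≠ 0 := h1.ne'
    have htTp : Tp - t ≠ 0 := by have := ht.2; intro h; linarith [ht.2]
    have hd1 : HasDerivAt (fun s => (Tp - s)/Tp) (-1/Tp) t := by
      have h : HasDerivAt (fun s => (Tp - s)) (-1) t := (hasDerivAt_id t).const_sub Tp
      simpa [neg_div] using h.div_const Tp
    have hd2 : HasDerivAt (fun s => ((Tp - s)/Tp) ^ η)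
        (η * ((Tp - t)/Tp) ^ (η - 1) * (-1/Tp)) t :=
      by have := (Real.hasDerivAt_rpow_const (p := η) (Or.inl hrne)).comp t hd1; exact this
    have hd3 : HasDerivAt (fun s => c * ((Tp - s)/Tp) ^ η)
        (c * (η * ((Tp - t)/Tp) ^ (η - 1) * (-1/Tp))) t := hd2.const_mul c
    have hd4 := (Real.hasDerivAt_tan (hcos t ht)).comp t hd3
    have hveq : v = fun s => Real.tan (c * ((Tp - s)/Tp) ^ η) := funext hv
    rw [hveq]
    refine hd4.congr_deriv (Eq.symm ?_)
    have harc : Real.arctan (Real.tan (c * ((Tp - t)/Tp) ^ η)) = c * ((Tp - t)/Tp) ^ η := by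
      have := harctan t ht; rwa [hv t] at this
    have hsq : Real.tan (c * ((Tp - t)/Tp) ^ η) ^ 2 + 1
        = (Real.cos (c * ((Tp - t)/Tp) ^ η) ^ 2)⁻¹ := by
      rw [← Real.inv_one_add_tan_sq (hcos t ht), inv_inv]; ring
    simp only [harc]
    rw [hsq]
    have hrsub : ((Tp - t)/Tp) ^ (η - 1) = ((Tp - t)/Tp) ^ η / ((Tp - t)/Tp) := by
      rw [Real.rpow_sub h1, Real.rpow_one]
    rw [hrsub]
    have hcos2 : Real.cos (c * ((Tp - t)/Tp) ^ η) ^ 2 ≠ 0 := pow_ne_zero _ (hcos t ht)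
    field_simp
  · intro hv₀ t ht h
    have hθ := harctan t ht
    rw [h, Real.arctan_zero] at hθ
    have hcne : c ≠ 0 := by
      simp only [hc, ne_eq, Real.arctan_eq_zero_iff]
      exact hv₀
    have := (key t ht).1
    rcases mul_eq_zero.1 hθ.symm with h' | h'
    · exact hcne h'
    · exact (Real.rpow_pos_of_pos this η).ne' h'
  · have h1 : Tendsto (fun s => (Tp - s)/Tp) (𝓝[<] Tp) (𝓝 0) := by
      have hct : ContinuousAt (fun s => (Tp - s)/Tp) Tp := by fun_prop
      have h' : Tendsto (fun s => (Tp - s)/Tp) (𝓝[<] Tp) (𝓝 ((Tp - Tp)/Tp)) :=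
        hct.tendsto.mono_left nhdsWithin_le_nhds
      simpa using h'
    have h2 : Tendsto (fun s => ((Tp - s)/Tp) ^ η) (𝓝[<] Tp) (𝓝 0) := by
      have hct : ContinuousAt (fun x : ℝ => x ^ η) 0 :=
        Real.continuousAt_rpow_const 0 η (Or.inr hη.le)
      have := hct.tendsto.comp h1
      simpa [Function.comp_def, Real.zero_rpow hη.ne'] using this
    have h3 : Tendsto (fun s => Real.tan (c * ((Tp - s)/Tp) ^ η)) (𝓝[<] Tp) (𝓝 0) := by
      have hct : ContinuousAt Real.tan 0 :=
        Real.continuousAt_tan.2 (by norm_num)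
      have h2' := h2.const_mul c
      rw [mul_zero] at h2'
      have := hct.tendsto.comp h2'
      simpa [Function.comp_def] using this
    exact h3.congr (fun s => (hv s).symm)
end

section
/- Let T_p > 0, η > 0 and v₀ ≥ 0. Define v : [0, T_p) → ℝ by v(t) = ln( 1 + (e^{v₀} − 1) ((T_p − t)/T_p)^η ). Then v(0) = v₀, v(t) ≥ 0 for all t, and for every t ∈ [0, T_p), v is differentiable at t with v'(t) = −η (1 − e^{−v(t)}) / (T_p − t). Moreover, if v₀ > 0 then v(t) > 0 for all t ∈ [0, T_p), and v(t) → 0 as t → T_p from the left. -/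
open Filter Topology Set Real

/-- The logarithmic reference convergence differential function (Example 1),
for nonnegative solutions: `v(t) = ln(1 + (e^{v₀} − 1)((T_p − t)/T_p)^η)`
satisfies `v(0) = v₀`, stays nonnegative, solves
`v' = −η (1 − e^{−v})/(T_p − t)` on `[0, T_p)`, stays positive there when
`v₀ > 0`, and converges to `0` exactly as `t → T_p⁻`. -/
theorem rcdf_log
    (Tp η v₀ : ℝ) (hTp : 0 < Tp) (hη : 0 < η) (hv₀ : 0 ≤ v₀)
    (v : ℝ → ℝ)
    (hv : ∀ t, v t = Real.log (1 + (Real.exp v₀ - 1) * ((Tp - t) / Tp) ^ η)) :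
    v 0 = v₀ ∧
      (∀ t ∈ Ico (0 : ℝ) Tp, 0 ≤ v t) ∧
      (∀ t ∈ Ico (0 : ℝ) Tp,
        HasDerivAt v (-η * (1 - Real.exp (-(v t))) / (Tp - t)) t) ∧
      (0 < v₀ → ∀ t ∈ Ico (0 : ℝ) Tp, 0 < v t) ∧
      Tendsto v (𝓝[<] Tp) (𝓝 0) := by
  set c := Real.exp v₀ - 1 with hc
  have hc0 : 0 ≤ c := by
    have := Real.one_le_exp hv₀
    simp [hc]; linarith
  refine ⟨?_, ?_, ?_, ?_, ?_⟩
  · rw [hv 0]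
    simp only [sub_zero, div_self hTp.ne', Real.one_rpow, mul_one, hc]
    rw [add_sub_cancel, Real.log_exp]
  · intro t ht
    obtain ⟨ht0, htp⟩ := ht
    rw [hv t]
    apply Real.log_nonneg
    have : 0 ≤ c * ((Tp - t) / Tp) ^ η :=
      mul_nonneg hc0 (Real.rpow_nonneg (div_nonneg (by linarith) hTp.le) _)
    linarith
  · intro t ht
    obtain ⟨ht0, htp⟩ := ht
    have hxt : 0 < Tp - t := by linarith
    have hx : 0 < (Tp - t) / Tp := div_pos hxt hTp
    have hu : (0:ℝ) < 1 + c * ((Tp - t) / Tp) ^ η := by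
      have : 0 ≤ c * ((Tp - t) / Tp) ^ η :=
        mul_nonneg hc0 (Real.rpow_nonneg hx.le _)
      linarith
    have hinner : HasDerivAt (fun s => (Tp - s) / Tp) (-1 / Tp) t := by
      simpa using ((hasDerivAt_id t).const_sub Tp).div_const Tp
    have hpow : HasDerivAt (fun s => ((Tp - s) / Tp) ^ η)
        (η * ((Tp - t) / Tp) ^ (η - 1) * (-1 / Tp)) t :=
      HasDerivAt.comp t (h := fun s => (Tp - s) / Tp) (h₂ := fun x => x ^ η) (Real.hasDerivAt_rpow_const (Or.inl hx.ne')) hinner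
    have hg : HasDerivAt (fun s => Real.log (1 + c * ((Tp - s) / Tp) ^ η))
        (c * (η * ((Tp - t) / Tp) ^ (η - 1) * (-1 / Tp)) /
          (1 + c * ((Tp - t) / Tp) ^ η)) t :=
      (((hpow.const_mul c).const_add 1).log hu.ne')
    have hg' : HasDerivAt v
        (c * (η * ((Tp - t) / Tp) ^ (η - 1) * (-1 / Tp)) /
          (1 + c * ((Tp - t) / Tp) ^ η)) t :=
      hg.congr_of_eventuallyEq (Filter.Eventually.of_forall fun s => hv s)
    convert hg' using 1
    have hexp : Real.exp (-(v t)) = (1 + c * ((Tp - t) / Tp) ^ η)⁻¹ := by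
      rw [hv t, Real.exp_neg, Real.exp_log hu]
    have hsplit : ((Tp - t) / Tp) ^ η = ((Tp - t) / Tp) ^ (η - 1) * ((Tp - t) / Tp) := by
      rw [← Real.rpow_add_one hx.ne' (η - 1)]; ring_nf
    rw [hexp, hsplit]
    field_simp
    ring
  · intro hv₀pos t ht
    obtain ⟨ht0, htp⟩ := ht
    have hxt : 0 < Tp - t := by linarith
    have hx : 0 < (Tp - t) / Tp := div_pos hxt hTp
    have hcpos : 0 < c := by
      have h := Real.exp_lt_exp.mpr hv₀pos
      simp only [Real.exp_zero] at h
      simp [hc]; linarith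
    rw [hv t]
    apply Real.log_pos
    have : 0 < c * ((Tp - t) / Tp) ^ η :=
      mul_pos hcpos (Real.rpow_pos_of_pos hx _)
    linarith
  · have hveq : v = fun s => Real.log (1 + c * ((Tp - s) / Tp) ^ η) :=
      funext fun s => hv s
    rw [hveq]
    have hcont : ContinuousAt (fun s : ℝ => Real.log (1 + c * ((Tp - s) / Tp) ^ η)) Tp := by
      have h1 : ContinuousAt (fun s : ℝ => (Tp - s) / Tp) Tp := by fun_prop
      have h2 : ContinuousAt (fun x : ℝ => x ^ η) ((Tp - Tp) / Tp) :=
        Real.continuousAt_rpow_const _ _ (Or.inr hη.le)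
      have h4 : ContinuousAt (fun s : ℝ => ((Tp - s) / Tp) ^ η) Tp := ContinuousAt.comp (f := fun s : ℝ => (Tp - s) / Tp) h2 h1
      have h3 : ContinuousAt (fun s : ℝ => 1 + c * ((Tp - s) / Tp) ^ η) Tp :=
        continuousAt_const.add (continuousAt_const.mul h4)
      refine ContinuousAt.log h3 ?_
      simp [Real.zero_rpow hη.ne']
    have htd := hcont.tendsto
    have h0 : Real.log (1 + c * ((Tp - Tp) / Tp) ^ η) = 0 := by
      simp [Real.zero_rpow hη.ne']
    rw [h0] at htd
    exact htd.mono_left nhdsWithin_le_nhds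
end

section
/- Suppose V : [0, ∞) → ℝ is differentiable, V(τ) ≥ 0 for all τ ≥ 0, and V'(τ) ≤ −V(τ)^{3/2} − V(τ)^{1/2} for all τ ≥ 0. Then V(τ) = 0 for all τ ≥ π. -/
open Filter Topology Set Real

/-- Remark 2: a nonnegative function satisfying the fixed-time differential
inequality `V' ≤ −V^{3/2} − V^{1/2}` on `[0, ∞)` vanishes for all `τ ≥ π`. -/
theorem fixed_time_vanishing
    (V V' : ℝ → ℝ)
    (hd : ∀ τ ∈ Ici (0 : ℝ), HasDerivAt V (V' τ) τ)
    (hnn : ∀ τ ∈ Ici (0 : ℝ), 0 ≤ V τ)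
    (hineq : ∀ τ ∈ Ici (0 : ℝ),
      V' τ ≤ -(V τ ^ ((3 : ℝ) / 2)) - V τ ^ ((1 : ℝ) / 2)) :
    ∀ τ, Real.pi ≤ τ → V τ = 0 := by
  have hπ : (0 : ℝ) < Real.pi := Real.pi_pos
  -- V is antitone on [0, ∞)
  have hVc : ContinuousOn V (Ici 0) := fun x hx =>
    (hd x hx).continuousAt.continuousWithinAt
  have hVanti : AntitoneOn V (Ici 0) := by
    apply antitoneOn_of_deriv_nonpos (convex_Ici 0) hVc
    · rw [interior_Ici]
      exact fun x hx => ((hd x (mem_Ici.mpr (le_of_lt hx))).differentiableAt).differentiableWithinAt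
    · rw [interior_Ici]
      intro x hx
      rw [(hd x (mem_Ici.mpr (le_of_lt hx))).deriv]
      have h1 := hineq x (mem_Ici.mpr (le_of_lt hx))
      have h2 : 0 ≤ V x ^ ((3 : ℝ) / 2) := Real.rpow_nonneg (hnn x (mem_Ici.mpr (le_of_lt hx))) _
      have h3 : 0 ≤ V x ^ ((1 : ℝ) / 2) := Real.rpow_nonneg (hnn x (mem_Ici.mpr (le_of_lt hx))) _
      linarith
  -- It suffices to show V π = 0
  suffices hVπ : V Real.pi = 0 by
    intro τ hτ
    have h1 : V τ ≤ V Real.pi := hVanti (le_of_lt hπ) (le_trans hπ.le hτ) hτ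
    have h2 : 0 ≤ V τ := hnn τ (le_trans hπ.le hτ)
    linarith
  by_contra hne
  have hpos : 0 < V Real.pi := lt_of_le_of_ne (hnn _ hπ.le) (Ne.symm hne)
  -- On [0, π], V is positive
  have hVpos : ∀ t ∈ Icc (0 : ℝ) Real.pi, 0 < V t := fun t ht =>
    lt_of_lt_of_le hpos (hVanti ht.1 (le_of_lt hπ) ht.2)
  -- The function g t = arctan (√(V t)) + t/2 is antitone on [0, π]
  set g : ℝ → ℝ := fun t => Real.arctan (Real.sqrt (V t)) + t / 2 with hg
  have hderiv : ∀ t ∈ Ioo (0 : ℝ) Real.pi,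
      HasDerivAt g (1 / (1 + Real.sqrt (V t) ^ 2) * (1 / (2 * Real.sqrt (V t)) * V' t)
        + 1 / 2) t := by
    intro t ht
    have hVt : 0 < V t := hVpos t ⟨ht.1.le, ht.2.le⟩
    have h1 : HasDerivAt V (V' t) t := hd t ht.1.le
    have h2 : HasDerivAt (fun s => Real.sqrt (V s))
        (1 / (2 * Real.sqrt (V t)) * V' t) t :=
      (Real.hasDerivAt_sqrt (ne_of_gt hVt)).comp t h1
    have h3 : HasDerivAt (fun s => Real.arctan (Real.sqrt (V s)))
        (1 / (1 + Real.sqrt (V t) ^ 2) * (1 / (2 * Real.sqrt (V t)) * V' t)) t :=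
      h2.arctan
    exact h3.add ((hasDerivAt_id t).div_const 2)
  have hderivle : ∀ t ∈ Ioo (0 : ℝ) Real.pi,
      1 / (1 + Real.sqrt (V t) ^ 2) * (1 / (2 * Real.sqrt (V t)) * V' t) + 1 / 2 ≤ 0 := by
    intro t ht
    have hVt : 0 < V t := hVpos t ⟨ht.1.le, ht.2.le⟩
    set s := Real.sqrt (V t) with hs
    have hspos : 0 < s := Real.sqrt_pos.mpr hVt
    have hsq : s ^ 2 = V t := Real.sq_sqrt hVt.le
    -- rewrite the rpows
    have hr1 : V t ^ ((1 : ℝ) / 2) = s := (Real.sqrt_eq_rpow (V t)).symm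
    have hr3 : V t ^ ((3 : ℝ) / 2) = V t * s := by
      rw [show (3 : ℝ) / 2 = 1 + 1 / 2 by norm_num, Real.rpow_add hVt,
        Real.rpow_one, hr1]
    have key : V' t ≤ -(s * (s ^ 2 + 1)) := by
      have := hineq t ht.1.le
      rw [hr1, hr3] at this
      nlinarith
    have hmul : 1 / (1 + s ^ 2) * (1 / (2 * s) * V' t)
        ≤ 1 / (1 + s ^ 2) * (1 / (2 * s) * (-(s * (s ^ 2 + 1)))) := by
      apply mul_le_mul_of_nonneg_left _ (by positivity)
      apply mul_le_mul_of_nonneg_left key (by positivity)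
    have heq : 1 / (1 + s ^ 2) * (1 / (2 * s) * (-(s * (s ^ 2 + 1)))) = -(1 / 2) := by
      field_simp
      ring
    linarith [hmul, heq ▸ hmul]
  have hganti : AntitoneOn g (Icc 0 Real.pi) := by
    apply antitoneOn_of_deriv_nonpos (convex_Icc 0 Real.pi)
    · apply ContinuousOn.add
      · exact Real.continuous_arctan.comp_continuousOn
          (Real.continuous_sqrt.comp_continuousOn
            (hVc.mono (Icc_subset_Ici_self)))
      · exact (continuous_id.div_const 2).continuousOn
    · rw [interior_Icc]
      exact fun t ht => ((hderiv t ht).differentiableAt).differentiableWithinAt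
    · rw [interior_Icc]
      intro t ht
      rw [(hderiv t ht).deriv]
      exact hderivle t ht
  have hle : g Real.pi ≤ g 0 :=
    hganti ⟨le_refl 0, hπ.le⟩ ⟨hπ.le, le_refl _⟩ hπ.le
  have h0 : g 0 < Real.pi / 2 := by
    have := Real.arctan_lt_pi_div_two (Real.sqrt (V 0))
    simp only [hg]
    linarith
  have hπ2 : Real.pi / 2 < g Real.pi := by
    have hsp : 0 < Real.sqrt (V Real.pi) := Real.sqrt_pos.mpr hpos
    have : Real.arctan 0 < Real.arctan (Real.sqrt (V Real.pi)) :=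
      Real.arctan_strictMono hsp
    rw [Real.arctan_zero] at this
    simp only [hg]
    linarith
  exact absurd hle (not_le.mpr (h0.trans hπ2))
end

section
/- Let T_p > 0 and k > 0. Suppose V : [0, T_p) → ℝ is differentiable, V(t) ≥ 0 for all t, and V'(t) = −k (1 − e^{−V(t)}) / (T_p − t) for all t ∈ [0, T_p). Then V(t) = ln( 1 + (e^{V(0)} − 1) ((T_p − t)/T_p)^k ) for all t ∈ [0, T_p). In particular, if V(0) > 0 then V(t) > 0 for all t ∈ [0, T_p) and V(t) → 0 as t → T_p from the left, i.e., V vanishes exactly at the prescribed instant T_p. -/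
open Filter Topology Set Real

/-- Remark 3 (free-will strong arbitrary time / prescribed-instant stability
for a scalar Lyapunov function): if `V ≥ 0` satisfies the EQUALITY
`V' = −k(1 − e^{−V})/(T_p − t)` on `[0, T_p)`, then
`V(t) = ln(1 + (e^{V(0)} − 1)((T_p − t)/T_p)^k)`; in particular, if
`V(0) > 0` then `V` stays positive on `[0, T_p)` and tends to `0` as
`t → T_p⁻`, i.e. `V` vanishes exactly at the prescribed instant `T_p`. -/
theorem prescribed_instant_exact
    (Tp k : ℝ) (hTp : 0 < Tp) (hk : 0 < k)
    (V V' : ℝ → ℝ)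
    (hd : ∀ t ∈ Ico (0 : ℝ) Tp, HasDerivAt V (V' t) t)
    (hnn : ∀ t ∈ Ico (0 : ℝ) Tp, 0 ≤ V t)
    (heq : ∀ t ∈ Ico (0 : ℝ) Tp,
      V' t = -k * (1 - Real.exp (-(V t))) / (Tp - t)) :
    (∀ t ∈ Ico (0 : ℝ) Tp,
      V t = Real.log (1 + (Real.exp (V 0) - 1) * ((Tp - t) / Tp) ^ k)) ∧
      (0 < V 0 →
        (∀ t ∈ Ico (0 : ℝ) Tp, 0 < V t) ∧ Tendsto V (𝓝[<] Tp) (𝓝 0)) := by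
  set g : ℝ → ℝ := fun t => (Real.exp (V t) - 1) * (Tp - t) ^ (-k) with hg
  have hderiv : ∀ s ∈ Ico (0:ℝ) Tp, HasDerivAt g 0 s := by
    intro s hs
    have hpos : 0 < Tp - s := by linarith [hs.2]
    have hne : Tp - s ≠ 0 := ne_of_gt hpos
    have h1 : HasDerivAt (fun u => Tp - u) (-1) s := by
      simpa using (hasDerivAt_id s).const_sub Tp
    have h2 : HasDerivAt (fun u : ℝ => (Tp - u) ^ (-k))
        (-1 * (-k) * (Tp - s) ^ (-k - 1)) s :=
      h1.rpow_const (Or.inl hne)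
    have h3 : HasDerivAt (fun u => Real.exp (V u) - 1)
        (Real.exp (V s) * V' s) s := ((hd s hs).exp).sub_const 1
    have h4 := h3.mul h2
    have hval : Real.exp (V s) * V' s * (Tp - s) ^ (-k)
        + (Real.exp (V s) - 1) * (-1 * (-k) * (Tp - s) ^ (-k - 1)) = 0 := by
      rw [heq s hs]
      have hsplit : (Tp - s) ^ (-k - 1) = (Tp - s) ^ (-k) * (Tp - s)⁻¹ := by
        rw [show -k - 1 = -k + -1 by ring, Real.rpow_add hpos, Real.rpow_neg_one]
      rw [hsplit, Real.exp_neg]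
      have hA : Real.exp (V s) ≠ 0 := Real.exp_ne_zero _
      field_simp
      ring
    rw [hg]
    exact h4.congr_deriv hval
  have key : ∀ t ∈ Ico (0:ℝ) Tp,
      Real.exp (V t) = 1 + (Real.exp (V 0) - 1) * ((Tp - t) / Tp) ^ k := by
    intro t ht
    have hsub : Icc (0:ℝ) t ⊆ Ico 0 Tp := fun x hx =>
      ⟨hx.1, lt_of_le_of_lt hx.2 ht.2⟩
    have hcont : ContinuousOn g (Icc 0 t) := fun x hx =>
      ((hderiv x (hsub hx)).continuousAt).continuousWithinAt
    have hdw : ∀ x ∈ Ico (0:ℝ) t, HasDerivWithinAt g 0 (Ici x) x := fun x hx =>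
      (hderiv x (hsub ⟨hx.1, hx.2.le⟩)).hasDerivWithinAt
    have hgt : g t = g 0 :=
      constant_of_has_deriv_right_zero hcont hdw t ⟨ht.1, le_refl t⟩
    have hpos : 0 < Tp - t := by linarith [ht.2]
    have hq : (Real.exp (V t) - 1) * (Tp - t) ^ (-k)
        = (Real.exp (V 0) - 1) * Tp ^ (-k) := by
      simpa [hg] using hgt
    have hrw : ((Tp - t) / Tp) ^ k = (Tp - t) ^ k * Tp ^ (-k) := by
      rw [Real.div_rpow hpos.le hTp.le, Real.rpow_neg hTp.le, div_eq_mul_inv]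
    have hmul : (Tp - t) ^ (-k) * (Tp - t) ^ k = 1 := by
      rw [← Real.rpow_add hpos]; simp
    have : Real.exp (V t) - 1
        = (Real.exp (V 0) - 1) * Tp ^ (-k) * (Tp - t) ^ k := by
      have := congrArg (fun x => x * (Tp - t) ^ k) hq
      simp only [mul_assoc] at this ⊢
      rwa [hmul, mul_one] at this
    rw [hrw]
    linarith [this]
  have hform : ∀ t ∈ Ico (0:ℝ) Tp,
      V t = Real.log (1 + (Real.exp (V 0) - 1) * ((Tp - t) / Tp) ^ k) := by
    intro t ht
    rw [← key t ht, Real.log_exp]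
  refine ⟨hform, fun hV0 => ?_⟩
  have hc : 0 < Real.exp (V 0) - 1 := by
    have := Real.exp_lt_exp.mpr hV0
    simp only [Real.exp_zero] at this
    linarith
  constructor
  · intro t ht
    have hpos : 0 < Tp - t := by linarith [ht.2]
    have hr : 0 < ((Tp - t) / Tp) ^ k :=
      Real.rpow_pos_of_pos (div_pos hpos hTp) k
    have h1 : 1 < Real.exp (V t) := by
      rw [key t ht]; nlinarith
    have := Real.exp_lt_exp.mp (by simpa [Real.exp_zero] using h1)
    exact this
  · have h0 : Tendsto (fun t => (Tp - t) / Tp) (𝓝[<] Tp) (𝓝 0) := by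
      have : Tendsto (fun t => (Tp - t) / Tp) (𝓝 Tp) (𝓝 ((Tp - Tp) / Tp)) :=
        ((continuous_const.sub continuous_id).div_const Tp).tendsto Tp
      simpa using this.mono_left nhdsWithin_le_nhds
    have h1 : Tendsto (fun t => ((Tp - t) / Tp) ^ k) (𝓝[<] Tp) (𝓝 0) := by
      have hc1 : ContinuousAt (fun x : ℝ => x ^ k) 0 :=
        Real.continuousAt_rpow_const 0 k (Or.inr hk.le)
      have := hc1.tendsto.comp h0
      simpa [Real.zero_rpow hk.ne', Function.comp_def] using this
    have h2 : Tendsto (fun t => 1 + (Real.exp (V 0) - 1) * ((Tp - t) / Tp) ^ k)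
        (𝓝[<] Tp) (𝓝 1) := by
      have := (h1.const_mul (Real.exp (V 0) - 1)).const_add 1
      simpa using this
    have h3 : Tendsto (fun t => Real.log (1 + (Real.exp (V 0) - 1)
        * ((Tp - t) / Tp) ^ k)) (𝓝[<] Tp) (𝓝 0) := by
      have hlog : ContinuousAt Real.log 1 := Real.continuousAt_log one_ne_zero
      have := hlog.tendsto.comp h2
      simpa [Real.log_one, Function.comp_def] using this
    have hev : (fun t => Real.log (1 + (Real.exp (V 0) - 1)
        * ((Tp - t) / Tp) ^ k)) =ᶠ[𝓝[<] Tp] V := by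
      filter_upwards [Ioo_mem_nhdsLT hTp]
        with t ht
      exact (hform t ⟨ht.1.le, ht.2⟩).symm
    exact h3.congr' hev
end

section
/- Let T_p > 0 and k₁ > 0. Suppose V : [0, T_p) → ℝ is differentiable, V(t) ≥ 0 for all t, and V'(t) ≤ −k₁ (1 − e^{−V(t)}) / (T_p − t) for all t ∈ [0, T_p). Then V(t) ≤ ln( 1 + (e^{V(0)} − 1) ((T_p − t)/T_p)^{k₁} ) for all t ∈ [0, T_p), and consequently V(t) → 0 as t → T_p from the left. -/
open Filter Topology Set Real

/-- Remark 3, upper clamp: a nonnegative Lyapunov function satisfying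
`V' ≤ −k₁(1 − e^{−V})/(T_p − t)` on `[0, T_p)` satisfies
`V(t) ≤ ln(1 + (e^{V(0)} − 1)((T_p − t)/T_p)^{k₁})`, and consequently
converges to zero no later than the prescribed instant `T_p`. -/
theorem prescribed_instant_upper_clamp
    (Tp k₁ : ℝ) (hTp : 0 < Tp) (hk : 0 < k₁)
    (V V' : ℝ → ℝ)
    (hd : ∀ t ∈ Ico (0 : ℝ) Tp, HasDerivAt V (V' t) t)
    (hnn : ∀ t ∈ Ico (0 : ℝ) Tp, 0 ≤ V t)
    (hineq : ∀ t ∈ Ico (0 : ℝ) Tp,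
      V' t ≤ -k₁ * (1 - Real.exp (-(V t))) / (Tp - t)) :
    (∀ t ∈ Ico (0 : ℝ) Tp,
      V t ≤ Real.log (1 + (Real.exp (V 0) - 1) * ((Tp - t) / Tp) ^ k₁)) ∧
      Tendsto V (𝓝[<] Tp) (𝓝 0) := by
  set g : ℝ → ℝ := fun t => (Real.exp (V t) - 1) * ((Tp - t) / Tp) ^ (-k₁) with hg
  -- derivative of g on Ico 0 Tp, with value ≤ 0
  have key : ∀ t ∈ Ico (0 : ℝ) Tp, ∃ d, HasDerivAt g d t ∧ d ≤ 0 := by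
    intro t ht
    have hpt : 0 < Tp - t := by linarith [ht.2]
    have hp : (0:ℝ) < (Tp - t) / Tp := div_pos hpt hTp
    have hA : 0 < ((Tp - t) / Tp) ^ (-k₁) := Real.rpow_pos_of_pos hp _
    have h1 : HasDerivAt (fun s => Real.exp (V s) - 1)
        (Real.exp (V t) * V' t) t := ((hd t ht).exp).sub_const 1
    have h2 : HasDerivAt (fun s => (Tp - s) / Tp) (-1 / Tp) t := by
      simpa using ((hasDerivAt_id t).const_sub Tp).div_const Tp
    have h3 : HasDerivAt (fun s => ((Tp - s) / Tp) ^ (-k₁))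
        ((-k₁) * ((Tp - t) / Tp) ^ (-k₁ - 1) * (-1 / Tp)) t := by
      have := (Real.hasDerivAt_rpow_const (p := -k₁) (Or.inl hp.ne')).comp t h2
      simpa [Function.comp_def, mul_comm, mul_assoc, mul_left_comm] using this
    have hgd : HasDerivAt g
        (Real.exp (V t) * V' t * ((Tp - t) / Tp) ^ (-k₁)
          + (Real.exp (V t) - 1) * ((-k₁) * ((Tp - t) / Tp) ^ (-k₁ - 1) * (-1 / Tp))) t :=
      h1.mul h3
    refine ⟨_, hgd, ?_⟩
    have hsub : ((Tp - t) / Tp) ^ (-k₁ - 1)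
        = ((Tp - t) / Tp) ^ (-k₁) / ((Tp - t) / Tp) := by
      rw [Real.rpow_sub hp, Real.rpow_one]
    have hsec : (Real.exp (V t) - 1) * ((-k₁) * ((Tp - t) / Tp) ^ (-k₁ - 1) * (-1 / Tp))
        = (Real.exp (V t) - 1) * k₁ * ((Tp - t) / Tp) ^ (-k₁) / (Tp - t) := by
      rw [hsub]
      field_simp
    have hid : Real.exp (V t) * (1 - Real.exp (-(V t))) = Real.exp (V t) - 1 := by
      have : Real.exp (V t) * Real.exp (-(V t)) = 1 := by
        rw [← Real.exp_add]; simp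
      nlinarith [this]
    have hfirst : Real.exp (V t) * V' t * ((Tp - t) / Tp) ^ (-k₁)
        ≤ -((Real.exp (V t) - 1) * k₁ * ((Tp - t) / Tp) ^ (-k₁) / (Tp - t)) := by
      have hmul : Real.exp (V t) * V' t
          ≤ Real.exp (V t) * (-k₁ * (1 - Real.exp (-(V t))) / (Tp - t)) :=
        mul_le_mul_of_nonneg_left (hineq t ht) (Real.exp_pos _).le
      have heq : Real.exp (V t) * (-k₁ * (1 - Real.exp (-(V t))) / (Tp - t))
          = -((Real.exp (V t) - 1) * k₁ / (Tp - t)) := by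
        rw [← hid, mul_div_assoc']
        rw [show Real.exp (V t) * (-k₁ * (1 - Real.exp (-(V t)))) = -(Real.exp (V t) * (1 - Real.exp (-(V t))) * k₁) by ring, neg_div]
      calc Real.exp (V t) * V' t * ((Tp - t) / Tp) ^ (-k₁)
          ≤ (-((Real.exp (V t) - 1) * k₁ / (Tp - t))) * ((Tp - t) / Tp) ^ (-k₁) := by
            rw [← heq]; exact mul_le_mul_of_nonneg_right hmul hA.le
        _ = -((Real.exp (V t) - 1) * k₁ * ((Tp - t) / Tp) ^ (-k₁) / (Tp - t)) := by ring
    rw [hsec]; linarith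
  -- g is antitone on Ico 0 Tp
  have hanti : AntitoneOn g (Ico 0 Tp) := by
    apply antitoneOn_of_deriv_nonpos (convex_Ico 0 Tp)
    · intro t ht
      obtain ⟨d, hdg, -⟩ := key t ht
      exact hdg.continuousAt.continuousWithinAt
    · intro t ht
      rw [interior_Ico] at ht
      obtain ⟨d, hdg, -⟩ := key t (Ioo_subset_Ico_self ht)
      exact hdg.differentiableAt.differentiableWithinAt
    · intro t ht
      rw [interior_Ico] at ht
      obtain ⟨d, hdg, hd0⟩ := key t (Ioo_subset_Ico_self ht)
      rw [hdg.deriv]; exact hd0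
  -- main pointwise bound on exp (V t)
  have hmain : ∀ t ∈ Ico (0 : ℝ) Tp,
      Real.exp (V t) ≤ 1 + (Real.exp (V 0) - 1) * ((Tp - t) / Tp) ^ k₁ := by
    intro t ht
    have hpt : 0 < Tp - t := by linarith [ht.2]
    have hp : (0:ℝ) < (Tp - t) / Tp := div_pos hpt hTp
    have h0 : (0:ℝ) ∈ Ico (0:ℝ) Tp := ⟨le_refl 0, hTp⟩
    have hgle : g t ≤ g 0 := hanti h0 ht ht.1
    have hg0 : g 0 = Real.exp (V 0) - 1 := by
      simp [hg, div_self hTp.ne']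
    have hone : ((Tp - t) / Tp) ^ (-k₁) * ((Tp - t) / Tp) ^ k₁ = 1 := by
      rw [← Real.rpow_add hp]; simp
    have hB : 0 < ((Tp - t) / Tp) ^ k₁ := Real.rpow_pos_of_pos hp _
    have := mul_le_mul_of_nonneg_right hgle hB.le
    rw [hg0] at this
    have hgt : g t * ((Tp - t) / Tp) ^ k₁ = Real.exp (V t) - 1 := by
      simp only [hg]
      rw [mul_assoc, hone, mul_one]
    rw [hgt] at this
    linarith
  have hbound : ∀ t ∈ Ico (0 : ℝ) Tp,
      V t ≤ Real.log (1 + (Real.exp (V 0) - 1) * ((Tp - t) / Tp) ^ k₁) := by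
    intro t ht
    have h := hmain t ht
    have hpos : 0 < Real.exp (V t) := Real.exp_pos _
    calc V t = Real.log (Real.exp (V t)) := (Real.log_exp _).symm
      _ ≤ Real.log (1 + (Real.exp (V 0) - 1) * ((Tp - t) / Tp) ^ k₁) :=
        Real.log_le_log hpos h
  refine ⟨hbound, ?_⟩
  -- tendsto part
  have hupper : Tendsto (fun t => Real.log (1 + (Real.exp (V 0) - 1) * ((Tp - t) / Tp) ^ k₁))
      (𝓝[<] Tp) (𝓝 0) := by
    have h1 : Tendsto (fun t => (Tp - t) / Tp) (𝓝[<] Tp) (𝓝 0) := by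
      have : Tendsto (fun t : ℝ => (Tp - t) / Tp) (𝓝 Tp) (𝓝 ((Tp - Tp) / Tp)) := by
        exact ((tendsto_const_nhds.sub tendsto_id).div_const Tp)
      simpa using this.mono_left nhdsWithin_le_nhds
    have h2 : Tendsto (fun x : ℝ => x ^ k₁) (𝓝 0) (𝓝 0) := by
      have := (Real.continuousAt_rpow_const 0 k₁ (Or.inr hk.le)).tendsto
      simpa [Real.zero_rpow hk.ne'] using this
    have h3 : Tendsto (fun t => ((Tp - t) / Tp) ^ k₁) (𝓝[<] Tp) (𝓝 0) := h2.comp h1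
    have h4 : Tendsto (fun t => 1 + (Real.exp (V 0) - 1) * ((Tp - t) / Tp) ^ k₁)
        (𝓝[<] Tp) (𝓝 1) := by
      have := (tendsto_const_nhds (x := (1:ℝ))).add ((tendsto_const_nhds (x := Real.exp (V 0) - 1)).mul h3)
      simpa using this
    have h5 : Tendsto Real.log (𝓝 1) (𝓝 0) := by
      have := (Real.continuousAt_log (x := 1) one_ne_zero).tendsto
      simpa using this
    exact h5.comp h4
  have hmem : Ioo 0 Tp ∈ 𝓝[<] Tp := Ioo_mem_nhdsLT hTp
  refine tendsto_of_tendsto_of_tendsto_of_le_of_le' tendsto_const_nhds hupper ?_ ?_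
  · filter_upwards [hmem] with t ht
    exact hnn t (Ioo_subset_Ico_self ht)
  · filter_upwards [hmem] with t ht
    exact hbound t (Ioo_subset_Ico_self ht)
end

section
/- Let T_p > 0 and k₂ > 0. Suppose V : [0, T_p) → ℝ is differentiable, V(t) ≥ 0 for all t, and V'(t) ≥ −k₂ (1 − e^{−V(t)}) / (T_p − t) for all t ∈ [0, T_p). Then V(t) ≥ ln( 1 + (e^{V(0)} − 1) ((T_p − t)/T_p)^{k₂} ) for all t ∈ [0, T_p). In particular, if V(0) > 0 then V(t) > 0 for every t ∈ [0, T_p), so V does not converge to zero before the instant T_p. -/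
open Filter Topology Set Real

/-- Remark 3, lower clamp: a nonnegative Lyapunov function satisfying the
reversed inequality `V' ≥ −k₂(1 − e^{−V})/(T_p − t)` on `[0, T_p)` satisfies
`V(t) ≥ ln(1 + (e^{V(0)} − 1)((T_p − t)/T_p)^{k₂})`; in particular, if
`V(0) > 0` then `V` stays positive on `[0, T_p)`, so it does not converge to
zero before the instant `T_p`. -/
theorem prescribed_instant_lower_clamp
    (Tp k₂ : ℝ) (hTp : 0 < Tp) (hk : 0 < k₂)
    (V V' : ℝ → ℝ)
    (hd : ∀ t ∈ Ico (0 : ℝ) Tp, HasDerivAt V (V' t) t)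
    (hnn : ∀ t ∈ Ico (0 : ℝ) Tp, 0 ≤ V t)
    (hineq : ∀ t ∈ Ico (0 : ℝ) Tp,
      -k₂ * (1 - Real.exp (-(V t))) / (Tp - t) ≤ V' t) :
    (∀ t ∈ Ico (0 : ℝ) Tp,
      Real.log (1 + (Real.exp (V 0) - 1) * ((Tp - t) / Tp) ^ k₂) ≤ V t) ∧
      (0 < V 0 → ∀ t ∈ Ico (0 : ℝ) Tp, 0 < V t) := by
  set G : ℝ → ℝ := fun s => (Real.exp (V s) - 1) * (Tp - s) ^ (-k₂) with hGdef
  have hG : ∀ s ∈ Ico (0:ℝ) Tp, HasDerivAt G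
      ((Real.exp (V s) * V' s) * (Tp - s) ^ (-k₂)
        + (Real.exp (V s) - 1) * ((-1) * (-k₂) * (Tp - s) ^ (-k₂ - 1))) s := by
    intro s hs
    have hpos : 0 < Tp - s := sub_pos.mpr hs.2
    have h1 : HasDerivAt (fun x : ℝ => Tp - x) (-1) s := by
      exact (hasDerivAt_id' s).const_sub Tp
    have h2 : HasDerivAt (fun x : ℝ => (Tp - x) ^ (-k₂))
        ((-1) * (-k₂) * (Tp - s) ^ (-k₂ - 1)) s :=
      h1.rpow_const (Or.inl (ne_of_gt hpos))
    have h3 : HasDerivAt (fun x => Real.exp (V x) - 1) (Real.exp (V s) * V' s) s := by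
      simpa using ((hd s hs).exp.sub_const 1)
    exact h3.mul h2
  have key : ∀ t ∈ Ico (0:ℝ) Tp,
      (Real.exp (V 0) - 1) * ((Tp - t) / Tp) ^ k₂ ≤ Real.exp (V t) - 1 := by
    intro t ht
    obtain ⟨ht0, htT⟩ := ht
    have hTt : 0 < Tp - t := sub_pos.mpr htT
    have hsub : Icc (0:ℝ) t ⊆ Ico 0 Tp := fun x hx => ⟨hx.1, lt_of_le_of_lt hx.2 htT⟩
    have hmono : MonotoneOn G (Icc 0 t) := by
      apply monotoneOn_of_deriv_nonneg (convex_Icc 0 t)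
      · exact fun x hx => (hG x (hsub hx)).continuousAt.continuousWithinAt
      · intro x hx
        rw [interior_Icc] at hx
        exact (hG x (hsub (Ioo_subset_Icc_self hx))).differentiableAt.differentiableWithinAt
      · intro x hx
        rw [interior_Icc] at hx
        have hx' := hsub (Ioo_subset_Icc_self hx)
        rw [(hG x hx').deriv]
        have hpos : 0 < Tp - x := sub_pos.mpr hx'.2
        have hB : 0 < (Tp - x) ^ (-k₂ - 1) := Real.rpow_pos_of_pos hpos _
        have hA : (Tp - x) ^ (-k₂) = (Tp - x) ^ (-k₂ - 1) * (Tp - x) := by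
          rw [← Real.rpow_add_one (ne_of_gt hpos)]; ring_nf
        have hE : (0:ℝ) < Real.exp (V x) := Real.exp_pos _
        have hEE : Real.exp (V x) * Real.exp (-(V x)) = 1 := by
          rw [← Real.exp_add]; simp
        have hiq : -k₂ * (1 - Real.exp (-(V x))) ≤ V' x * (Tp - x) :=
          (div_le_iff₀ hpos).mp (hineq x hx')
        have hbr : 0 ≤ Real.exp (V x) * (V' x * (Tp - x)) + k₂ * (Real.exp (V x) - 1) := by
          nlinarith [mul_le_mul_of_nonneg_left hiq hE.le]
        rw [hA]
        nlinarith [mul_nonneg hB.le hbr]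
    have hG0t : G 0 ≤ G t := hmono ⟨le_refl 0, ht0⟩ ⟨ht0, le_refl t⟩ ht0
    have h1 : (Tp - t) ^ (-k₂) * (Tp - t) ^ k₂ = 1 := by
      rw [← Real.rpow_add hTt]; simp
    have h2 : ((Tp - t) / Tp) ^ k₂ = (Tp - t) ^ k₂ * Tp ^ (-k₂) := by
      rw [Real.div_rpow hTt.le hTp.le, Real.rpow_neg hTp.le, div_eq_mul_inv]
    have hq := mul_le_mul_of_nonneg_right hG0t (Real.rpow_pos_of_pos hTt k₂).le
    simp only [hGdef, sub_zero] at hq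
    calc (Real.exp (V 0) - 1) * ((Tp - t) / Tp) ^ k₂
        = (Real.exp (V 0) - 1) * Tp ^ (-k₂) * (Tp - t) ^ k₂ := by rw [h2]; ring
      _ ≤ (Real.exp (V t) - 1) * (Tp - t) ^ (-k₂) * (Tp - t) ^ k₂ := hq
      _ = Real.exp (V t) - 1 := by rw [mul_assoc, h1, mul_one]
  have hV0nn : 0 ≤ V 0 := hnn 0 ⟨le_refl 0, hTp⟩
  have hfirst : ∀ t ∈ Ico (0:ℝ) Tp,
      Real.log (1 + (Real.exp (V 0) - 1) * ((Tp - t) / Tp) ^ k₂) ≤ V t := by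
    intro t ht
    have hkey := key t ht
    have hE0 : (1:ℝ) ≤ Real.exp (V 0) := Real.one_le_exp hV0nn
    have hr : 0 ≤ ((Tp - t) / Tp) ^ k₂ :=
      Real.rpow_nonneg (div_nonneg (sub_pos.mpr ht.2).le hTp.le) k₂
    have hL : 0 < 1 + (Real.exp (V 0) - 1) * ((Tp - t) / Tp) ^ k₂ := by
      nlinarith
    rw [Real.log_le_iff_le_exp hL]
    linarith
  refine ⟨hfirst, fun hV0 t ht => ?_⟩
  have hkey := key t ht
  have hE0 : (1:ℝ) < Real.exp (V 0) := by
    have := Real.add_one_le_exp (V 0); linarith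
  have hr : 0 < ((Tp - t) / Tp) ^ k₂ :=
    Real.rpow_pos_of_pos (div_pos (sub_pos.mpr ht.2) hTp) k₂
  have hgt : 1 < 1 + (Real.exp (V 0) - 1) * ((Tp - t) / Tp) ^ k₂ := by
    nlinarith
  exact lt_of_lt_of_le (Real.log_pos hgt) (hfirst t ht)
end

section
/- Let T_p > 0 and η > 0. Suppose V : [0, T_p) → ℝ is differentiable, V(t) ≥ 0 for all t, and V'(t) ≤ −η V(t)/(T_p − t) for all t ∈ [0, T_p). Then V(t) ≤ V(0) ((T_p − t)/T_p)^η for all t ∈ [0, T_p), and consequently V(t) → 0 as t → T_p from the left. -/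
open Filter Topology Set Real

/-- Upper-clamp comparison lemma for the linear RCDF: a nonnegative Lyapunov
function satisfying `V' ≤ −ηV/(T_p − t)` on `[0, T_p)` satisfies
`V(t) ≤ V(0)((T_p − t)/T_p)^η`, and consequently converges to zero no later
than the prescribed instant `T_p`. -/
theorem linear_rcdf_upper_clamp
    (Tp η : ℝ) (hTp : 0 < Tp) (hη : 0 < η)
    (V V' : ℝ → ℝ)
    (hd : ∀ t ∈ Ico (0 : ℝ) Tp, HasDerivAt V (V' t) t)
    (hnn : ∀ t ∈ Ico (0 : ℝ) Tp, 0 ≤ V t)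
    (hineq : ∀ t ∈ Ico (0 : ℝ) Tp, V' t ≤ -η * V t / (Tp - t)) :
    (∀ t ∈ Ico (0 : ℝ) Tp, V t ≤ V 0 * ((Tp - t) / Tp) ^ η) ∧
      Tendsto V (𝓝[<] Tp) (𝓝 0) := by
  set F : ℝ → ℝ := fun t => V t * (Tp - t) ^ (-η) with hF
  have hderiv : ∀ x ∈ Ico (0 : ℝ) Tp,
      HasDerivAt F (V' x * (Tp - x) ^ (-η) + V x * (η * (Tp - x) ^ (-η - 1))) x := by
    intro x hx
    have hu : 0 < Tp - x := by linarith [hx.2]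
    have h1 : HasDerivAt (fun t : ℝ => Tp - t) (-1) x := by
      simpa using (hasDerivAt_id x).const_sub Tp
    have h2 : HasDerivAt (fun y : ℝ => y ^ (-η)) (-η * (Tp - x) ^ (-η - 1)) (Tp - x) :=
      Real.hasDerivAt_rpow_const (Or.inl hu.ne')
    have h3 : HasDerivAt (fun t : ℝ => (Tp - t) ^ (-η)) (η * (Tp - x) ^ (-η - 1)) x := by
      have := h2.comp x h1
      exact this.congr_deriv (by ring)
    exact (hd x hx).mul h3
  have hdnonpos : ∀ x ∈ Ico (0 : ℝ) Tp,
      V' x * (Tp - x) ^ (-η) + V x * (η * (Tp - x) ^ (-η - 1)) ≤ 0 := by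
    intro x hx
    have hu : 0 < Tp - x := by linarith [hx.2]
    have ha : (0 : ℝ) < (Tp - x) ^ (-η) := Real.rpow_pos_of_pos hu _
    have hsub : (Tp - x) ^ (-η - 1) = (Tp - x) ^ (-η) / (Tp - x) := by
      rw [Real.rpow_sub hu, Real.rpow_one]
    have h := hineq x hx
    have : V' x * (Tp - x) ^ (-η) ≤ (-η * V x / (Tp - x)) * (Tp - x) ^ (-η) :=
      mul_le_mul_of_nonneg_right h ha.le
    rw [hsub]
    have heq : (-η * V x / (Tp - x)) * (Tp - x) ^ (-η)
        + V x * (η * ((Tp - x) ^ (-η) / (Tp - x))) = 0 := by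
      field_simp
      ring
    nlinarith
  have key : ∀ t ∈ Ico (0 : ℝ) Tp, V t ≤ V 0 * ((Tp - t) / Tp) ^ η := by
    intro t0 ht0
    obtain ⟨ht0l, ht0r⟩ := ht0
    have hsubset : Icc (0 : ℝ) t0 ⊆ Ico (0 : ℝ) Tp :=
      fun x hx => ⟨hx.1, lt_of_le_of_lt hx.2 ht0r⟩
    have cont : ContinuousOn F (Icc 0 t0) := fun x hx =>
      ((hderiv x (hsubset hx)).continuousAt).continuousWithinAt
    have hintsub : interior (Icc (0 : ℝ) t0) ⊆ Ico (0 : ℝ) Tp := by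
      rw [interior_Icc]; exact fun x hx => ⟨hx.1.le, hx.2.trans ht0r⟩
    have mono : AntitoneOn F (Icc 0 t0) := by
      refine antitoneOn_of_deriv_nonpos (convex_Icc 0 t0) cont
        (fun x hx => (hderiv x (hintsub hx)).differentiableAt.differentiableWithinAt)
        (fun x hx => ?_)
      rw [(hderiv x (hintsub hx)).deriv]
      exact hdnonpos x (hintsub hx)
    have hFle : F t0 ≤ F 0 :=
      mono ⟨le_refl 0, ht0l⟩ ⟨ht0l, le_refl t0⟩ ht0l
    have hu : 0 < Tp - t0 := by linarith
    have hFle' : V t0 * (Tp - t0) ^ (-η) ≤ V 0 * Tp ^ (-η) := by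
      simpa [hF] using hFle
    have hb : (0 : ℝ) < (Tp - t0) ^ η := Real.rpow_pos_of_pos hu _
    have := mul_le_mul_of_nonneg_right hFle' hb.le
    calc V t0 = V t0 * (Tp - t0) ^ (-η) * (Tp - t0) ^ η := by
          rw [mul_assoc, ← Real.rpow_add hu, neg_add_cancel, Real.rpow_zero, mul_one]
      _ ≤ V 0 * Tp ^ (-η) * (Tp - t0) ^ η := this
      _ = V 0 * ((Tp - t0) / Tp) ^ η := by
          rw [Real.div_rpow hu.le hTp.le, Real.rpow_neg hTp.le]
          ring
  refine ⟨key, ?_⟩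
  have hmem : Ioo (0 : ℝ) Tp ∈ 𝓝[<] Tp := Ioo_mem_nhdsLT_of_mem ⟨hTp, le_refl Tp⟩
  have hbase : Tendsto (fun t => (Tp - t) / Tp) (𝓝[<] Tp) (𝓝 0) := by
    have : Tendsto (fun t => (Tp - t) / Tp) (𝓝 Tp) (𝓝 ((Tp - Tp) / Tp)) :=
      ((tendsto_const_nhds.sub tendsto_id).div_const Tp)
    simpa using this.mono_left nhdsWithin_le_nhds
  have hrpow : Tendsto (fun t => V 0 * ((Tp - t) / Tp) ^ η) (𝓝[<] Tp) (𝓝 0) := by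
    have hc : ContinuousAt (fun x : ℝ => x ^ η) 0 :=
      Real.continuousAt_rpow_const 0 η (Or.inr hη.le)
    have := (hc.tendsto.comp hbase).const_mul (V 0)
    simpa [Real.zero_rpow hη.ne'] using this
  refine squeeze_zero' ?_ ?_ hrpow
  · filter_upwards [hmem] with t ht
    exact hnn t ⟨ht.1.le, ht.2⟩
  · filter_upwards [hmem] with t ht
    exact key t ⟨ht.1.le, ht.2⟩
end

section
/- Let T_p > 0 and η > 0. Suppose V : [0, T_p) → ℝ is differentiable, V(t) ≥ 0 for all t, and V'(t) ≥ −η V(t)/(T_p − t) for all t ∈ [0, T_p). Then V(t) ≥ V(0) ((T_p − t)/T_p)^η for all t ∈ [0, T_p). In particular, if V(0) > 0 then V(t) > 0 for every t ∈ [0, T_p), so V does not vanish before the instant T_p. -/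
open Filter Topology Set Real

/-- Lower-clamp comparison lemma for the linear RCDF: a nonnegative Lyapunov
function satisfying the reversed inequality `V' ≥ −ηV/(T_p − t)` on `[0, T_p)`
satisfies `V(t) ≥ V(0)((T_p − t)/T_p)^η`; in particular, if `V(0) > 0` then
`V` stays positive on `[0, T_p)`, so it does not vanish before `T_p`. -/
theorem linear_rcdf_lower_clamp
    (Tp η : ℝ) (hTp : 0 < Tp) (hη : 0 < η)
    (V V' : ℝ → ℝ)
    (hd : ∀ t ∈ Ico (0 : ℝ) Tp, HasDerivAt V (V' t) t)
    (hnn : ∀ t ∈ Ico (0 : ℝ) Tp, 0 ≤ V t)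
    (hineq : ∀ t ∈ Ico (0 : ℝ) Tp, -η * V t / (Tp - t) ≤ V' t) :
    (∀ t ∈ Ico (0 : ℝ) Tp, V 0 * ((Tp - t) / Tp) ^ η ≤ V t) ∧
      (0 < V 0 → ∀ t ∈ Ico (0 : ℝ) Tp, 0 < V t) := by
  set f : ℝ → ℝ := fun t => (Tp - t) / Tp with hf
  set W : ℝ → ℝ := fun t => V t * f t ^ (-η) with hW
  have hfpos : ∀ t ∈ Ico (0 : ℝ) Tp, 0 < f t := by
    intro t ht
    exact div_pos (by linarith [ht.2]) hTp
  -- derivative of W at points of Ico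
  have hWd : ∀ t ∈ Ico (0 : ℝ) Tp,
      HasDerivAt W (V' t * f t ^ (-η) + V t * ((-1 / Tp) * (-η) * f t ^ (-η - 1))) t := by
    intro t ht
    have h1 : HasDerivAt f (-1 / Tp) t := by
      have : HasDerivAt (fun t : ℝ => Tp - t) (-1) t := by
        simpa using (hasDerivAt_id t).const_sub Tp
      simpa [hf] using this.div_const Tp
    have h2 : HasDerivAt (fun t => f t ^ (-η)) ((-1 / Tp) * (-η) * f t ^ (-η - 1)) t :=
      h1.rpow_const (Or.inl (ne_of_gt (hfpos t ht)))
    exact (hd t ht).mul h2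
  -- nonnegativity of derivative of W
  have hWd0 : ∀ t ∈ Ico (0 : ℝ) Tp,
      0 ≤ V' t * f t ^ (-η) + V t * ((-1 / Tp) * (-η) * f t ^ (-η - 1)) := by
    intro t ht
    have hfp := hfpos t ht
    have hTt : 0 < Tp - t := by linarith [ht.2]
    have hpow : (0 : ℝ) < f t ^ (-η) := Real.rpow_pos_of_pos hfp _
    have hsplit : f t ^ (-η - 1) = f t ^ (-η) * (f t)⁻¹ := by
      rw [show -η - 1 = -η + (-1) by ring, Real.rpow_add hfp, Real.rpow_neg_one]
    have hfinv : (f t)⁻¹ = Tp / (Tp - t) := by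
      rw [hf]; field_simp
    have key : V t * ((-1 / Tp) * (-η) * f t ^ (-η - 1))
        = η * V t / (Tp - t) * f t ^ (-η) := by
      rw [hsplit, hfinv]
      field_simp
    rw [key]
    have h1 : -η * V t / (Tp - t) * f t ^ (-η) ≤ V' t * f t ^ (-η) :=
      mul_le_mul_of_nonneg_right (hineq t ht) hpow.le
    have h2 : -η * V t / (Tp - t) * f t ^ (-η) = -(η * V t / (Tp - t) * f t ^ (-η)) := by
      ring
    linarith [h2 ▸ h1]
  -- W is monotone on Ico 0 Tp
  have hmono : MonotoneOn W (Ico (0 : ℝ) Tp) := by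
    apply monotoneOn_of_hasDerivWithinAt_nonneg (convex_Ico 0 Tp)
      (f' := fun t => V' t * f t ^ (-η) + V t * ((-1 / Tp) * (-η) * f t ^ (-η - 1)))
    · exact fun t ht => (hWd t ht).continuousAt.continuousWithinAt
    · intro t ht
      rw [interior_Ico] at ht
      exact (hWd t ⟨ht.1.le, ht.2⟩).hasDerivWithinAt
    · intro t ht
      rw [interior_Ico] at ht
      exact hWd0 t ⟨ht.1.le, ht.2⟩
  have main : ∀ t ∈ Ico (0 : ℝ) Tp, V 0 * ((Tp - t) / Tp) ^ η ≤ V t := by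
    intro t ht
    have h0 : (0 : ℝ) ∈ Ico (0 : ℝ) Tp := ⟨le_refl 0, hTp⟩
    have hWle : W 0 ≤ W t := hmono h0 ht ht.1
    have hf0 : f 0 = 1 := by rw [hf]; field_simp; simp
    have hW0 : W 0 = V 0 := by simp [hW, hf0]
    have hfp := hfpos t ht
    have hpowpos : (0 : ℝ) < f t ^ η := Real.rpow_pos_of_pos hfp _
    have : V 0 * f t ^ η ≤ W t * f t ^ η :=
      mul_le_mul_of_nonneg_right (hW0 ▸ hWle) hpowpos.le
    calc V 0 * ((Tp - t) / Tp) ^ η = V 0 * f t ^ η := rfl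
      _ ≤ W t * f t ^ η := this
      _ = V t * (f t ^ (-η) * f t ^ η) := by rw [hW]; ring
      _ = V t := by rw [← Real.rpow_add hfp]; simp
  refine ⟨main, fun hV0 t ht => ?_⟩
  have hfp := hfpos t ht
  have hpowpos : (0 : ℝ) < f t ^ η := Real.rpow_pos_of_pos hfp _
  exact lt_of_lt_of_le (mul_pos hV0 hpowpos) (main t ht)
end

section
/- Let n ≥ 2, T_p > 0, and η₁, …, ηₙ > 0, and set η_min = min(η₁, …, ηₙ) and η_max = max(η₁, …, ηₙ). Suppose z = (z₁, …, zₙ) : [0, T_p) → ℝⁿ is differentiable and satisfies z₁'(t) = z₂(t) − η₁ z₁(t)/(T_p − t); zᵢ'(t) = z_{i+1}(t) − z_{i−1}(t) − ηᵢ zᵢ(t)/(T_p − t) for 2 ≤ i ≤ n−1; and zₙ'(t) = −z_{n−1}(t) − ηₙ zₙ(t)/(T_p − t), for all t ∈ [0, T_p). Then for all t ∈ [0, T_p), ‖z(0)‖² ((T_p − t)/T_p)^{2η_max} ≤ ‖z(t)‖² ≤ ‖z(0)‖² ((T_p − t)/T_p)^{2η_min}, where ‖·‖ is the Euclidean norm.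 Consequently z(t) → 0 as t → T_p from the left, and if z(0) ≠ 0 then z(t) ≠ 0 for every t ∈ [0, T_p): the settling time of z equals exactly the prescribed instant T_p. -/
open Filter Topology Set Finset


lemma telescope_aux (n : ℕ) (hn : 2 ≤ n) (f : ℕ → ℝ) :
    ∑ i ∈ Finset.Icc 1 n, (if i < n then f i * f (i+1) else 0)
      = ∑ i ∈ Finset.Icc 1 n, (if 1 < i then f i * f (i-1) else 0) := by
  rw [← Finset.sum_filter, ← Finset.sum_filter]
  have h1 : (Finset.Icc 1 n).filter (fun i => i < n) = Finset.Ico 1 n := by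
    ext a; simp only [Finset.mem_filter, Finset.mem_Icc, Finset.mem_Ico]; omega
  have h2 : (Finset.Icc 1 n).filter (fun i => 1 < i) = Finset.Ico 2 (n+1) := by
    ext a; simp only [Finset.mem_filter, Finset.mem_Icc, Finset.mem_Ico]; omega
  rw [h1, h2, Finset.sum_Ico_eq_sum_range, Finset.sum_Ico_eq_sum_range]
  apply Finset.sum_congr rfl
  intro i _
  have e1 : 1 + i + 1 = 2 + i := by omega
  have e2 : 2 + i - 1 = 1 + i := by omega
  rw [e1, e2]; ring

lemma decay_bound (Tp c : ℝ) (hTp : 0 < Tp) (V g : ℝ → ℝ)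
    (hV : ∀ t ∈ Set.Ico (0:ℝ) Tp, HasDerivAt V (g t) t)
    (hle : ∀ t ∈ Set.Ico (0:ℝ) Tp, g t * (Tp - t) + 2 * c * V t ≤ 0) :
    ∀ t ∈ Set.Ico (0:ℝ) Tp, V t ≤ V 0 * ((Tp - t) / Tp) ^ (2 * c) := by
  intro t ht
  obtain ⟨ht0, htTp⟩ := ht
  set F : ℝ → ℝ := fun x => V x * (Tp - x) ^ (-(2*c)) with hF
  have hpos : ∀ x ∈ Set.Ico (0:ℝ) Tp, 0 < Tp - x := fun x hx => by
    have := hx.2; linarith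
  have hFderiv : ∀ x ∈ Set.Ico (0:ℝ) Tp, HasDerivAt F
      (g x * (Tp - x) ^ (-(2*c)) + V x * ((-(2*c)) * (Tp - x) ^ (-(2*c) - 1) * (-1))) x := by
    intro x hx
    have h1 : HasDerivAt (fun y : ℝ => Tp - y) (-1) x := by
      simpa using (hasDerivAt_id x).const_sub Tp
    have h2 := h1.rpow_const (p := -(2*c)) (Or.inl (ne_of_gt (hpos x hx)))
    exact ((hV x hx).mul h2).congr_deriv (by ring)
  have hsub : Set.Icc (0:ℝ) t ⊆ Set.Ico 0 Tp := fun x hx => ⟨hx.1, lt_of_le_of_lt hx.2 htTp⟩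
  have hmemIco : ∀ x ∈ interior (Set.Icc (0:ℝ) t), x ∈ Set.Ico (0:ℝ) Tp := by
    intro x hx; rw [interior_Icc] at hx; exact hsub ⟨hx.1.le, hx.2.le⟩
  have hanti : AntitoneOn F (Set.Icc 0 t) := by
    apply antitoneOn_of_deriv_nonpos (convex_Icc 0 t)
    · exact fun x hx => ((hFderiv x (hsub hx)).differentiableAt).continuousAt.continuousWithinAt
    · exact fun x hx => ((hFderiv x (hmemIco x hx)).differentiableAt).differentiableWithinAt
    · intro x hx
      have hx' := hmemIco x hx
      rw [(hFderiv x hx').deriv]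
      have hp := hpos x hx'
      have e1 : (Tp - x) ^ (-(2*c)) = (Tp - x) ^ (-(2*c) - 1) * (Tp - x) := by
        rw [← Real.rpow_add_one (ne_of_gt hp)]; ring_nf
      have heq : g x * (Tp-x)^(-(2*c)) + V x * ((-(2*c)) * (Tp-x)^(-(2*c)-1) * (-1))
          = (Tp - x) ^ (-(2*c) - 1) * (g x * (Tp - x) + 2*c*V x) := by rw [e1]; ring
      rw [heq]
      exact mul_nonpos_of_nonneg_of_nonpos (Real.rpow_nonneg hp.le _) (hle x hx')
  have hkey : F t ≤ F 0 := hanti (Set.left_mem_Icc.mpr ht0) (Set.right_mem_Icc.mpr ht0) ht0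
  have hpt : 0 < Tp - t := by linarith
  have hb : (0:ℝ) < (Tp - t) ^ (2*c) := Real.rpow_pos_of_pos hpt _
  have hB : (0:ℝ) < Tp ^ (2*c) := Real.rpow_pos_of_pos hTp _
  have hFt : F t = V t / (Tp - t) ^ (2*c) := by
    rw [hF]; simp only []
    rw [Real.rpow_neg hpt.le, div_eq_mul_inv]
  have hF0 : F 0 = V 0 / Tp ^ (2*c) := by
    rw [hF]; simp only [sub_zero]
    rw [Real.rpow_neg hTp.le, div_eq_mul_inv]
  rw [hFt, hF0, div_le_div_iff₀ hb hB] at hkey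
  have hdiv : ((Tp - t) / Tp) ^ (2*c) = (Tp - t) ^ (2*c) / Tp ^ (2*c) :=
    Real.div_rpow hpt.le hTp.le (2*c)
  rw [hdiv]
  have hre : V 0 * ((Tp-t)^(2*c)/Tp^(2*c)) = (V 0 * (Tp-t)^(2*c))/Tp^(2*c) := by ring
  rw [hre, le_div_iff₀ hB]
  exact hkey
/-- Core of Theorem 1 (prescribed-instant stability): for the backstepping
error dynamics of the `n`-th order integrator chain with the linear reference
convergence differential functions `ψᵢ(zᵢ,t) = ηᵢ zᵢ/(T_p − t)`, the squared
Euclidean norm `‖z(t)‖² = Σᵢ zᵢ(t)²` is clamped between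
`‖z(0)‖² ((T_p − t)/T_p)^{2η_max}` and `‖z(0)‖² ((T_p − t)/T_p)^{2η_min}`;
consequently `z(t) → 0` as `t → T_p⁻`, and if `z(0) ≠ 0` then `z(t) ≠ 0` for
every `t ∈ [0, T_p)`: the settling time equals exactly `T_p`. -/
theorem prescribed_instant_stability
    (n : ℕ) (hn : 2 ≤ n) (Tp : ℝ) (hTp : 0 < Tp)
    (η : ℕ → ℝ) (hη : ∀ i ∈ Finset.Icc 1 n, 0 < η i)
    (ηmin ηmax : ℝ)
    (hmin : IsLeast {r : ℝ | ∃ i ∈ Finset.Icc 1 n, η i = r} ηmin)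
    (hmax : IsGreatest {r : ℝ | ∃ i ∈ Finset.Icc 1 n, η i = r} ηmax)
    (z : ℕ → ℝ → ℝ)
    (hz1 : ∀ t ∈ Ico (0 : ℝ) Tp,
      HasDerivAt (z 1) (z 2 t - η 1 * z 1 t / (Tp - t)) t)
    (hzi : ∀ i, 2 ≤ i → i ≤ n - 1 → ∀ t ∈ Ico (0 : ℝ) Tp,
      HasDerivAt (z i) (z (i + 1) t - z (i - 1) t - η i * z i t / (Tp - t)) t)
    (hzn : ∀ t ∈ Ico (0 : ℝ) Tp,
      HasDerivAt (z n) (-z (n - 1) t - η n * z n t / (Tp - t)) t) :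
    (∀ t ∈ Ico (0 : ℝ) Tp,
      (∑ i ∈ Finset.Icc 1 n, (z i 0) ^ 2) * ((Tp - t) / Tp) ^ (2 * ηmax)
          ≤ ∑ i ∈ Finset.Icc 1 n, (z i t) ^ 2 ∧
        ∑ i ∈ Finset.Icc 1 n, (z i t) ^ 2
          ≤ (∑ i ∈ Finset.Icc 1 n, (z i 0) ^ 2) * ((Tp - t) / Tp) ^ (2 * ηmin)) ∧
      Tendsto (fun t => ∑ i ∈ Finset.Icc 1 n, (z i t) ^ 2) (𝓝[<] Tp) (𝓝 0) ∧
      ((∃ i ∈ Finset.Icc 1 n, z i 0 ≠ 0) →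
        ∀ t ∈ Ico (0 : ℝ) Tp, ∃ i ∈ Finset.Icc 1 n, z i t ≠ 0) := by
  set V : ℝ → ℝ := fun t => ∑ i ∈ Finset.Icc 1 n, (z i t) ^ 2 with hVdef
  set E : ℝ → ℝ := fun t => ∑ i ∈ Finset.Icc 1 n, η i * (z i t) ^ 2 with hEdef
  have hpos : ∀ t ∈ Set.Ico (0:ℝ) Tp, 0 < Tp - t := fun t ht => by
    have := ht.2; linarith
  -- derivative of each coordinate, in uniform form
  have hD : ∀ i ∈ Finset.Icc 1 n, ∀ t ∈ Set.Ico (0:ℝ) Tp,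
      HasDerivAt (z i)
        ((if i < n then z (i+1) t else 0) - (if 1 < i then z (i-1) t else 0)
          - η i * z i t / (Tp - t)) t := by
    intro i hi t ht
    rw [Finset.mem_Icc] at hi
    rcases eq_or_lt_of_le hi.1 with h1 | h1
    · -- i = 1
      have : i = 1 := h1.symm
      subst this
      have hifn : (1:ℕ) < n := by omega
      simpa [hifn] using hz1 t ht
    · rcases eq_or_lt_of_le hi.2 with h2 | h2
      · -- i = n
        subst h2
        have : ¬ (i < i) := lt_irrefl i
        simpa [this, h1] using hzn t ht
      · -- middle
        have hifn : i < n := h2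
        simpa [hifn, h1] using hzi i (by omega) (by omega) t ht
  -- derivative of V
  have hV' : ∀ t ∈ Set.Ico (0:ℝ) Tp, HasDerivAt V (-2 * E t / (Tp - t)) t := by
    intro t ht
    have hsum : HasDerivAt V
        (∑ i ∈ Finset.Icc 1 n, (2:ℕ) * z i t ^ (2-1) *
          ((if i < n then z (i+1) t else 0) - (if 1 < i then z (i-1) t else 0)
            - η i * z i t / (Tp - t))) t :=
      HasDerivAt.fun_sum (fun i hi => (hD i hi t ht).pow 2)
    convert hsum using 1
    have hexp : ∀ i, ((2:ℕ):ℝ) * z i t ^ (2-1) *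
        ((if i < n then z (i+1) t else 0) - (if 1 < i then z (i-1) t else 0)
          - η i * z i t / (Tp - t))
        = 2 * (if i < n then z i t * z (i+1) t else 0)
          - 2 * (if 1 < i then z i t * z (i-1) t else 0)
          - 2 * (η i * z i t ^ 2 / (Tp - t)) := by
      intro i
      push_cast
      split_ifs <;> ring
    rw [Finset.sum_congr rfl (fun i _ => hexp i)]
    rw [Finset.sum_sub_distrib, Finset.sum_sub_distrib,
      ← Finset.mul_sum, ← Finset.mul_sum, ← Finset.mul_sum,
      telescope_aux n hn (fun i => z i t)]
    rw [hEdef]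
    rw [← Finset.sum_div]
    ring
  -- bounds between E and V
  have hminpos : 0 < ηmin := by
    obtain ⟨i, hi, hie⟩ := hmin.1
    exact hie ▸ hη i hi
  have hmaxpos : 0 < ηmax := by
    obtain ⟨i, hi, hie⟩ := hmax.1
    exact hie ▸ hη i hi
  have hEge : ∀ t, ηmin * V t ≤ E t := by
    intro t
    rw [hVdef, hEdef]
    simp only [Finset.mul_sum]
    apply Finset.sum_le_sum
    intro i hi
    exact mul_le_mul_of_nonneg_right (hmin.2 ⟨i, hi, rfl⟩) (sq_nonneg _)
  have hEle : ∀ t, E t ≤ ηmax * V t := by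
    intro t
    rw [hVdef, hEdef]
    simp only [Finset.mul_sum]
    apply Finset.sum_le_sum
    intro i hi
    exact mul_le_mul_of_nonneg_right (hmax.2 ⟨i, hi, rfl⟩) (sq_nonneg _)
  -- upper bound
  have hupper : ∀ t ∈ Set.Ico (0:ℝ) Tp, V t ≤ V 0 * ((Tp - t)/Tp) ^ (2*ηmin) := by
    apply decay_bound Tp ηmin hTp V (fun t => -2 * E t / (Tp - t)) hV'
    intro t ht
    have hp := hpos t ht
    rw [div_mul_cancel₀ _ (ne_of_gt hp)]
    have := hEge t
    nlinarith
  -- lower bound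
  have hlower : ∀ t ∈ Set.Ico (0:ℝ) Tp, V 0 * ((Tp - t)/Tp) ^ (2*ηmax) ≤ V t := by
    have hneg : ∀ t ∈ Set.Ico (0:ℝ) Tp,
        (fun t => -V t) t ≤ (fun t => -V t) 0 * ((Tp - t)/Tp) ^ (2*ηmax) := by
      apply decay_bound Tp ηmax hTp (fun t => -V t) (fun t => 2 * E t / (Tp - t))
      · intro t ht
        have := (hV' t ht).neg
        exact this.congr_deriv (by ring)
      · intro t ht
        have hp := hpos t ht
        rw [div_mul_cancel₀ _ (ne_of_gt hp)]
        have := hEle t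
        nlinarith
    intro t ht
    have := hneg t ht
    simp only [neg_mul] at this
    linarith
  have hVnonneg : ∀ t, 0 ≤ V t := fun t =>
    Finset.sum_nonneg (fun i _ => sq_nonneg _)
  refine ⟨fun t ht => ⟨hlower t ht, hupper t ht⟩, ?_, ?_⟩
  · -- tendsto
    have hIoo : Set.Ioo (0:ℝ) Tp ∈ 𝓝[<] Tp :=
      Ioo_mem_nhdsLT hTp
    have h1 : Tendsto (fun t => (Tp - t)/Tp) (𝓝[<] Tp) (𝓝 0) := by
      have : Tendsto (fun t => (Tp - t)/Tp) (𝓝 Tp) (𝓝 ((Tp - Tp)/Tp)) :=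
        ((continuous_const.sub continuous_id).div_const Tp).tendsto Tp
      simpa using this.mono_left nhdsWithin_le_nhds
    have h2 : Tendsto (fun x : ℝ => x ^ (2*ηmin)) (𝓝 0) (𝓝 0) := by
      have hc : ContinuousAt (fun x : ℝ => x ^ (2*ηmin)) 0 :=
        Real.continuousAt_rpow_const 0 (2*ηmin) (Or.inr (by positivity))
      have := hc.tendsto
      rwa [Real.zero_rpow (by positivity)] at this
    have htend : Tendsto (fun t => V 0 * ((Tp - t)/Tp) ^ (2*ηmin)) (𝓝[<] Tp) (𝓝 0) := by
      have := (h2.comp h1).const_mul (V 0)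
      simpa using this
    apply tendsto_of_tendsto_of_tendsto_of_le_of_le' tendsto_const_nhds htend
    · exact Filter.Eventually.of_forall (fun t => hVnonneg t)
    · exact Filter.eventually_of_mem hIoo (fun t ht => hupper t ⟨ht.1.le, ht.2⟩)
  · -- nonvanishing
    rintro ⟨i, hi, hzi0⟩ t ht
    have hV0 : 0 < V 0 := by
      have h1 : (0:ℝ) < z i 0 ^ 2 := pow_two_pos_of_ne_zero hzi0
      have h2 : z i 0 ^ 2 ≤ V 0 :=
        Finset.single_le_sum (fun j _ => sq_nonneg (z j 0)) hi
      linarith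
    have hr : (0:ℝ) < ((Tp - t)/Tp) ^ (2*ηmax) :=
      Real.rpow_pos_of_pos (div_pos (hpos t ht) hTp) _
    have hVt : 0 < V t := lt_of_lt_of_le (by positivity) (hlower t ht)
    by_contra h
    push_neg at h
    have : V t = 0 := Finset.sum_eq_zero (fun j hj => by rw [h j hj]; ring)
    linarith
end

section
/- Let T_p > 0, c ∈ ℝ, η₁ > 2 and η₂ > 1. Consider the double integrator x₁' = x₂, x₂' = u(x₁, x₂, t) on [0, T_p) with the backstepping controller u(x₁, x₂, t) = −η₁ x₂/(T_p − t) − η₁ (x₁ − c)/(T_p − t)² − (x₁ − c) − η₂ (x₂ + η₁ (x₁ − c)/(T_p − t))/(T_p − t). Then every differentiable solution (x₁, x₂) : [0, T_p) → ℝ² of this closed-loop system satisfies x₁(t) → c, x₂(t) → 0, and u(x₁(t), x₂(t), t) → 0 as t → T_p from the left. -/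
set_option maxHeartbeats 1000000

open Filter Topology Set

/-- If a function has nonpositive derivative at every point of `[0, Tp)`, then it
is bounded by its initial value there. -/
lemma le_init_of_deriv_nonpos {Tp : ℝ} (hTp : 0 < Tp) {F : ℝ → ℝ}
    (hd : ∀ t ∈ Ico (0:ℝ) Tp, ∃ d, HasDerivAt F d t ∧ d ≤ 0) :
    ∀ t ∈ Ico (0:ℝ) Tp, F t ≤ F 0 := by
  have hA : AntitoneOn F (Ico 0 Tp) := by
    apply antitoneOn_of_deriv_nonpos (convex_Ico 0 Tp)
    · intro t ht
      obtain ⟨d, hF, _⟩ := hd t ht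
      exact hF.continuousAt.continuousWithinAt
    · intro t ht
      rw [interior_Ico] at ht
      obtain ⟨d, hF, _⟩ := hd t (Ioo_subset_Ico_self ht)
      exact hF.differentiableAt.differentiableWithinAt
    · intro t ht
      rw [interior_Ico] at ht
      obtain ⟨d, hF, hd0⟩ := hd t (Ioo_subset_Ico_self ht)
      rw [hF.deriv]; exact hd0
  exact fun t ht => hA ⟨le_rfl, hTp⟩ ht ht.1

/-- If `f t ^ 2 ≤ K (Tp − t)^p` on `[0, Tp)` with `p > 0`, then `f → 0` as `t → Tp⁻`. -/
lemma tendsto_sq_aux {Tp K p : ℝ} (hTp : 0 < Tp) (hp : 0 < p) {f : ℝ → ℝ}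
    (hf : ∀ t ∈ Ico (0:ℝ) Tp, (f t)^2 ≤ K * (Tp - t) ^ p) :
    Tendsto f (𝓝[<] Tp) (𝓝 0) := by
  have hmem : Ico (0:ℝ) Tp ∈ 𝓝[<] Tp :=
    mem_of_superset (Ioo_mem_nhdsLT hTp) Ioo_subset_Ico_self
  have hTt : Tendsto (fun t => Tp - t) (𝓝[<] Tp) (𝓝 0) := by
    have h : Tendsto (fun t : ℝ => Tp - t) (𝓝 Tp) (𝓝 (Tp - Tp)) :=
      (continuous_const.sub continuous_id).tendsto Tp
    simpa using h.mono_left nhdsWithin_le_nhds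
  have hpow : Tendsto (fun t => K * (Tp - t) ^ p) (𝓝[<] Tp) (𝓝 0) := by
    have h0 : Tendsto (fun x : ℝ => x ^ p) (𝓝 0) (𝓝 0) := by
      have := (Real.continuousAt_rpow_const 0 p (Or.inr hp.le)).tendsto
      rwa [Real.zero_rpow hp.ne'] at this
    have := (h0.comp hTt).const_mul K
    simpa using this
  have hsq : Tendsto (fun t => (f t)^2) (𝓝[<] Tp) (𝓝 0) := by
    refine squeeze_zero' ?_ ?_ hpow
    · exact Eventually.of_forall fun t => sq_nonneg _
    · filter_upwards [hmem] with t ht using hf t ht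
  have habs : Tendsto (fun t => |f t|) (𝓝[<] Tp) (𝓝 0) := by
    have := (Real.continuous_sqrt.tendsto 0).comp hsq
    have heq : ((fun x => √x) ∘ fun t => f t ^ 2) = fun t => |f t| := by
      funext t; simp [Function.comp, Real.sqrt_sq_eq_abs]
    rw [heq] at this; simpa using this
  exact squeeze_zero_norm' (Eventually.of_forall fun t => le_of_eq (Real.norm_eq_abs _)) habs

/-- Theorem 1 for the double integrator in original coordinates: under the
backstepping controller
`u = −η₁x₂/(T_p−t) − η₁(x₁−c)/(T_p−t)² − (x₁−c) − η₂(x₂ + η₁(x₁−c)/(T_p−t))/(T_p−t)`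
with `η₁ > 2`, `η₂ > 1`, every solution of `x₁' = x₂`, `x₂' = u` on `[0, T_p)`
satisfies `x₁(t) → c`, `x₂(t) → 0` and `u(x₁(t), x₂(t), t) → 0` as `t → T_p⁻`. -/
theorem double_integrator_prescribed_instant
    (Tp c η₁ η₂ : ℝ) (hTp : 0 < Tp) (hη₁ : 2 < η₁) (hη₂ : 1 < η₂)
    (u : ℝ → ℝ → ℝ → ℝ)
    (hu : ∀ a b t, u a b t =
      -η₁ * b / (Tp - t) - η₁ * (a - c) / (Tp - t) ^ 2 - (a - c)
        - η₂ * (b + η₁ * (a - c) / (Tp - t)) / (Tp - t))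
    (x₁ x₂ : ℝ → ℝ)
    (hx₁ : ∀ t ∈ Ico (0 : ℝ) Tp, HasDerivAt x₁ (x₂ t) t)
    (hx₂ : ∀ t ∈ Ico (0 : ℝ) Tp, HasDerivAt x₂ (u (x₁ t) (x₂ t) t) t) :
    Tendsto x₁ (𝓝[<] Tp) (𝓝 c) ∧
      Tendsto x₂ (𝓝[<] Tp) (𝓝 0) ∧
      Tendsto (fun t => u (x₁ t) (x₂ t) t) (𝓝[<] Tp) (𝓝 0) := by
  set z₁ : ℝ → ℝ := fun t => x₁ t - c with hz₁def
  set z₂ : ℝ → ℝ := fun t => x₂ t + η₁ * (x₁ t - c) / (Tp - t) with hz₂def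
  have hT : ∀ t ∈ Ico (0:ℝ) Tp, 0 < Tp - t := fun t ht => sub_pos.mpr ht.2
  have hwd : ∀ t : ℝ, HasDerivAt (fun τ => Tp - τ) (-1) t := fun t => by
    simpa using (hasDerivAt_id t).const_sub Tp
  have hwpow : ∀ (r : ℝ), ∀ t ∈ Ico (0:ℝ) Tp,
      HasDerivAt (fun τ => (Tp - τ) ^ r) (-(r * (Tp - t) ^ (r - 1))) t := by
    intro r t ht
    have h1 : HasDerivAt (fun x : ℝ => x ^ r) (r * (Tp - t) ^ (r - 1)) (Tp - t) :=
      Real.hasDerivAt_rpow_const (Or.inl (hT t ht).ne')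
    have h2 := h1.comp t (hwd t)
    rw [show -(r * (Tp - t) ^ (r - 1)) = r * (Tp - t) ^ (r - 1) * -1 by ring]
    exact h2
  have hx₂eq : ∀ t, x₂ t = z₂ t - η₁ * z₁ t / (Tp - t) := by
    intro t; simp only [hz₂def, hz₁def]; ring
  have hz₁d : ∀ t ∈ Ico (0:ℝ) Tp,
      HasDerivAt z₁ (z₂ t - η₁ * z₁ t / (Tp - t)) t := by
    intro t ht
    rw [← hx₂eq t]
    exact (hx₁ t ht).sub_const c
  have hz₂d : ∀ t ∈ Ico (0:ℝ) Tp,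
      HasDerivAt z₂ (-z₁ t - η₂ * z₂ t / (Tp - t)) t := by
    intro t ht
    have hTt := hT t ht
    have hN : HasDerivAt (fun τ => η₁ * (x₁ τ - c)) (η₁ * x₂ t) t :=
      ((hx₁ t ht).sub_const c).const_mul η₁
    have hq := hN.div (hwd t) hTt.ne'
    have hsum := (hx₂ t ht).add hq
    have key : u (x₁ t) (x₂ t) t
          + (η₁ * x₂ t * (Tp - t) - η₁ * (x₁ t - c) * (-1)) / (Tp - t) ^ 2
        = -z₁ t - η₂ * z₂ t / (Tp - t) := by
      rw [hu]; simp only [hz₂def, hz₁def]; field_simp; ring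
    rw [key] at hsum
    exact hsum
  set μ : ℝ := min η₁ η₂ with hμdef
  have hμ1 : 1 < μ := lt_min (by linarith) hη₂
  have hμη₁ : μ ≤ η₁ := min_le_left _ _
  have hμη₂ : μ ≤ η₂ := min_le_right _ _
  -- First Lyapunov bound: `z₁² + z₂² ≤ C (Tp − t)^{2μ}`
  have bound1 : ∀ t ∈ Ico (0:ℝ) Tp, z₁ t ^ 2 + z₂ t ^ 2
      ≤ ((z₁ 0)^2 + (z₂ 0)^2) * Tp ^ (-(2*μ)) * (Tp - t) ^ (2*μ) := by
    have hderiv : ∀ t ∈ Ico (0:ℝ) Tp, ∃ d,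
        HasDerivAt (fun τ => (z₁ τ ^ 2 + z₂ τ ^ 2) * (Tp - τ) ^ (-(2*μ))) d t ∧ d ≤ 0 := by
      intro t ht
      have hTt := hT t ht
      have hVd : HasDerivAt (fun τ => z₁ τ ^ 2 + z₂ τ ^ 2)
          ((2:ℕ) * z₁ t ^ 1 * (z₂ t - η₁ * z₁ t / (Tp - t))
            + (2:ℕ) * z₂ t ^ 1 * (-z₁ t - η₂ * z₂ t / (Tp - t))) t :=
        ((hz₁d t ht).pow 2).add ((hz₂d t ht).pow 2)
      have hFd := hVd.mul (hwpow (-(2*μ)) t ht)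
      refine ⟨_, hFd, ?_⟩
      have hQ : (0:ℝ) ≤ (Tp - t) ^ (-(2*μ)-1) := Real.rpow_nonneg hTt.le _
      have hPQ : (Tp - t) ^ (-(2*μ)) = (Tp - t) ^ (-(2*μ)-1) * (Tp - t) := by
        rw [← Real.rpow_add_one hTt.ne' (-(2*μ)-1)]
        congr 1
        ring
      rw [hPQ]
      have hE : ((2:ℕ) * z₁ t ^ 1 * (z₂ t - η₁ * z₁ t / (Tp - t))
            + (2:ℕ) * z₂ t ^ 1 * (-z₁ t - η₂ * z₂ t / (Tp - t)))
            * ((Tp - t) ^ (-(2*μ)-1) * (Tp - t))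
          + (z₁ t ^ 2 + z₂ t ^ 2) * -(-(2*μ) * (Tp - t) ^ (-(2*μ) - 1))
          = (Tp - t) ^ (-(2*μ)-1)
            * ((2*μ - 2*η₁) * z₁ t ^ 2 + (2*μ - 2*η₂) * z₂ t ^ 2) := by
        push_cast
        field_simp
        ring
      rw [hE]
      have hE0 : (2*μ - 2*η₁) * z₁ t ^ 2 + (2*μ - 2*η₂) * z₂ t ^ 2 ≤ 0 := by
        nlinarith [sq_nonneg (z₁ t), sq_nonneg (z₂ t)]
      exact mul_nonpos_of_nonneg_of_nonpos hQ hE0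
    have hle := le_init_of_deriv_nonpos hTp hderiv
    intro t ht
    have hTt := hT t ht
    have hFt := hle t ht
    simp only [sub_zero] at hFt
    have hPpos : (0:ℝ) < (Tp - t) ^ (2*μ) := Real.rpow_pos_of_pos hTt _
    rw [Real.rpow_neg hTt.le, ← div_eq_mul_inv, div_le_iff₀ hPpos] at hFt
    exact hFt
  -- constants
  set C : ℝ := ((z₁ 0)^2 + (z₂ 0)^2) * Tp ^ (-(2*μ)) with hCdef
  have hC0 : 0 ≤ C := by rw [hCdef]; positivity
  set s : ℝ := 4 + min (2*η₁ - 4) (2*μ - 2) / 2 with hsdef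
  have hmin : 0 < min (2*η₁ - 4) (2*μ - 2) := lt_min (by linarith) (by linarith)
  have hs4 : 4 < s := by rw [hsdef]; linarith
  have hsη : s < 2*η₁ := by
    have h := min_le_left (2*η₁ - 4) (2*μ - 2)
    rw [hsdef]; linarith
  have hsμ : s < 2*μ + 2 := by
    have h := min_le_right (2*η₁ - 4) (2*μ - 2)
    rw [hsdef]; linarith
  set κ : ℝ := 2*η₁ - s with hκdef
  have hκ : 0 < κ := by rw [hκdef]; linarith
  set β : ℝ := 2*μ + 2 - s with hβdef
  have hβ : 0 < β := by rw [hβdef]; linarith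
  set D : ℝ := C / κ with hDdef
  have hD0 : 0 ≤ D := div_nonneg hC0 hκ.le
  -- Second (weighted) Lyapunov bound: `z₁² ≤ M (Tp − t)^s` with `s > 4`
  have bound2 : ∀ t ∈ Ico (0:ℝ) Tp, z₁ t ^ 2
      ≤ ((z₁ 0)^2 * Tp ^ (-s) + (D/β) * Tp ^ β) * (Tp - t) ^ s := by
    have hderiv : ∀ t ∈ Ico (0:ℝ) Tp, ∃ d,
        HasDerivAt (fun τ => z₁ τ ^ 2 * (Tp - τ) ^ (-s) + (D/β) * (Tp - τ) ^ β) d t ∧ d ≤ 0 := by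
      intro t ht
      have hTt := hT t ht
      have hGd := (((hz₁d t ht).pow 2).mul (hwpow (-s) t ht)).add
        ((hwpow β t ht).const_mul (D/β))
      refine ⟨_, hGd, ?_⟩
      have hQ : (0:ℝ) ≤ (Tp - t) ^ (-s-1) := Real.rpow_nonneg hTt.le _
      have hPQ : (Tp - t) ^ (-s) = (Tp - t) ^ (-s-1) * (Tp - t) := by
        rw [← Real.rpow_add_one hTt.ne' (-s-1)]; congr 1; ring
      have hR : (Tp - t) ^ (β - 1)
          = (Tp - t) ^ (2*μ) * ((Tp - t) ^ (-s-1) * (Tp - t) * (Tp - t)) := by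
        rw [← Real.rpow_add_one hTt.ne' (-s-1), ← Real.rpow_add_one hTt.ne' (-s-1+1),
          ← Real.rpow_add hTt]
        congr 1; rw [hβdef]; ring
      have hz₂b : z₂ t ^ 2 ≤ C * (Tp - t) ^ (2*μ) := by
        nlinarith [bound1 t ht, sq_nonneg (z₁ t)]
      rw [hPQ, hR]
      have hE : ((2:ℕ) * z₁ t ^ 1 * (z₂ t - η₁ * z₁ t / (Tp - t)))
            * ((Tp - t) ^ (-s-1) * (Tp - t))
            + z₁ t ^ 2 * -(-s * (Tp - t) ^ (-s - 1))
            + D / β * -(β * ((Tp - t) ^ (2*μ) * ((Tp - t) ^ (-s-1) * (Tp - t) * (Tp - t))))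
          = (Tp - t) ^ (-s-1) * (2 * z₁ t * z₂ t * (Tp - t) - κ * z₁ t ^ 2
              - D * (Tp - t) ^ (2*μ) * ((Tp - t) * (Tp - t))) := by
        rw [hκdef]
        push_cast
        field_simp
        ring
      rw [show (2 - 1 : ℕ) = 1 from rfl, Pi.pow_apply, hE]
      have h1 : D * κ = C := by rw [hDdef]; field_simp
      have hbr : 2 * z₁ t * z₂ t * (Tp - t) - κ * z₁ t ^ 2
          - D * (Tp - t) ^ (2*μ) * ((Tp - t) * (Tp - t)) ≤ 0 := by
        have h3 : D * (Tp - t) ^ (2*μ) * ((Tp - t) * (Tp - t)) * κ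
            = C * ((Tp - t) ^ (2*μ) * ((Tp - t) * (Tp - t))) := by rw [← h1]; ring
        nlinarith [sq_nonneg (κ * z₁ t - z₂ t * (Tp - t)), h3, hκ, hTt,
          mul_le_mul_of_nonneg_right hz₂b (mul_nonneg hTt.le hTt.le)]
      exact mul_nonpos_of_nonneg_of_nonpos hQ hbr
    have hle := le_init_of_deriv_nonpos hTp hderiv
    intro t ht
    have hTt := hT t ht
    have hFt := hle t ht
    simp only [sub_zero] at hFt
    have hnn : 0 ≤ (D/β) * (Tp - t) ^ β := by positivity
    have h2 : z₁ t ^ 2 * (Tp - t) ^ (-s) ≤ (z₁ 0)^2 * Tp ^ (-s) + (D/β) * Tp ^ β := by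
      linarith
    have hPpos : (0:ℝ) < (Tp - t) ^ s := Real.rpow_pos_of_pos hTt _
    rw [Real.rpow_neg hTt.le, ← div_eq_mul_inv, div_le_iff₀ hPpos] at h2
    exact h2
  set M : ℝ := (z₁ 0)^2 * Tp ^ (-s) + (D/β) * Tp ^ β with hMdef
  have hrp_split : ∀ t : ℝ, 0 < Tp - t → ∀ (p : ℝ) (n : ℕ),
      (Tp - t) ^ (p + (n:ℝ)) = (Tp - t) ^ p * (Tp - t) ^ n := by
    intro t ht p n
    rw [Real.rpow_add ht, Real.rpow_natCast]
  have L1 : Tendsto z₁ (𝓝[<] Tp) (𝓝 0) :=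
    tendsto_sq_aux hTp (by linarith) bound2
  have L2 : Tendsto (fun t => z₁ t / (Tp - t)) (𝓝[<] Tp) (𝓝 0) := by
    refine tendsto_sq_aux hTp (K := M) (p := s - 2) (by linarith) ?_
    intro t ht
    have hTt := hT t ht
    rw [div_pow, div_le_iff₀ (by positivity)]
    have h4 : M * (Tp - t) ^ (s - 2) * (Tp - t) ^ (2:ℕ)
        = M * (Tp - t) ^ ((s-2) + ((2:ℕ):ℝ)) := by
      rw [hrp_split t hTt (s-2) 2]; ring
    rw [h4, show (s-2) + ((2:ℕ):ℝ) = s by push_cast; ring]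
    exact bound2 t ht
  have L3 : Tendsto (fun t => z₁ t / (Tp - t) ^ 2) (𝓝[<] Tp) (𝓝 0) := by
    refine tendsto_sq_aux hTp (K := M) (p := s - 4) (by linarith) ?_
    intro t ht
    have hTt := hT t ht
    rw [div_pow, div_le_iff₀ (by positivity)]
    have h5 : (((Tp - t) ^ 2) ^ 2 : ℝ) = (Tp - t) ^ (4:ℕ) := by ring
    rw [h5]
    have h4 : M * (Tp - t) ^ (s - 4) * (Tp - t) ^ (4:ℕ)
        = M * (Tp - t) ^ ((s-4) + ((4:ℕ):ℝ)) := by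
      rw [hrp_split t hTt (s-4) 4]; ring
    rw [h4, show (s-4) + ((4:ℕ):ℝ) = s by push_cast; ring]
    exact bound2 t ht
  have L4 : Tendsto z₂ (𝓝[<] Tp) (𝓝 0) := by
    refine tendsto_sq_aux hTp (K := C) (p := 2*μ) (by linarith) ?_
    intro t ht
    nlinarith [bound1 t ht, sq_nonneg (z₁ t)]
  have L5 : Tendsto (fun t => z₂ t / (Tp - t)) (𝓝[<] Tp) (𝓝 0) := by
    refine tendsto_sq_aux hTp (K := C) (p := 2*μ - 2) (by linarith) ?_
    intro t ht
    have hTt := hT t ht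
    rw [div_pow, div_le_iff₀ (by positivity)]
    have h4 : C * (Tp - t) ^ (2*μ - 2) * (Tp - t) ^ (2:ℕ)
        = C * (Tp - t) ^ ((2*μ-2) + ((2:ℕ):ℝ)) := by
      rw [hrp_split t hTt (2*μ-2) 2]; ring
    rw [h4, show (2*μ-2) + ((2:ℕ):ℝ) = 2*μ by push_cast; ring]
    nlinarith [bound1 t ht, sq_nonneg (z₁ t)]
  refine ⟨?_, ?_, ?_⟩
  · have hfun : x₁ = fun t => z₁ t + c := by funext t; simp [hz₁def]
    rw [hfun]
    simpa using L1.add (tendsto_const_nhds (x := c))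
  · have hfun : x₂ = fun t => z₂ t - η₁ * (z₁ t / (Tp - t)) := by
      funext t; simp only [hz₂def, hz₁def]; ring
    rw [hfun]
    simpa using L4.sub (L2.const_mul η₁)
  · have hueq : (fun t => -z₁ t + (η₁*η₁ - η₁) * (z₁ t / (Tp - t) ^ 2)
        - (η₁ + η₂) * (z₂ t / (Tp - t))) =ᶠ[𝓝[<] Tp] (fun t => u (x₁ t) (x₂ t) t) := by
      filter_upwards [self_mem_nhdsWithin] with t ht
      have hTt : Tp - t ≠ 0 := sub_ne_zero.mpr (ne_of_gt ht)
      rw [hu]; simp only [hz₂def, hz₁def]; field_simp; ring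
    have hcomb : Tendsto (fun t => -z₁ t + (η₁*η₁ - η₁) * (z₁ t / (Tp - t) ^ 2)
        - (η₁ + η₂) * (z₂ t / (Tp - t))) (𝓝[<] Tp) (𝓝 0) := by
      have := (L1.neg.add (L3.const_mul (η₁*η₁ - η₁))).sub (L5.const_mul (η₁ + η₂))
      simpa using this
    exact hcomb.congr' hueq
end
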